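/- arXiv:2111.05693 — 6 statements merged into one kernel-verified Lean document; each statement's English description precedes it below -/
import Mathlib

section
/- Let ω₁, ω₂ be majorants, let i, j be orthogonal imaginary units, and let f be a slice regular function on D⁴ with ℂ(i)-components f₁, f₂ on D_i. Suppose there are constants C₁, C₂ > 0 such that ‖f_k(x) − f_k(y)‖ ≤ C_k·ω_k(‖x − y‖) for all x, y ∈ D_i and k = 1, 2. Then for all p, q ∈ D⁴ one has ‖f(p) − f(q)‖ ≤ 6·max(C₁, C₂)·(ω₁(‖p − q‖) + ω₂(‖p − q‖)). -/
noncomputable section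

notation "ℍ" => Quaternion ℝ

def IsImaginaryUnit (i : ℍ) : Prop := i.re = 0 ∧ ‖i‖ = 1

def OrthogonalUnits (i j : ℍ) : Prop :=
  IsImaginaryUnit i ∧ IsImaginaryUnit j ∧ (i * star j).re = 0

def qslice (i : ℍ) : Set ℍ := {z | ∃ x y : ℝ, z = (x : ℍ) + y • i}

def sliceDisc (i : ℍ) : Set ℍ := {z ∈ qslice i | ‖z‖ < 1}

def sliceCircle (i : ℍ) : Set ℍ := {z ∈ qslice i | ‖z‖ = 1}

def unitBall : Set ℍ := {q : ℍ | ‖q‖ < 1}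

structure IsMajorant (ω : ℝ → ℝ) : Prop where
  contOn : ContinuousOn ω (Set.Icc 0 2)
  map_zero : ω 0 = 0
  nonneg : ∀ t ∈ Set.Icc (0:ℝ) 2, 0 ≤ ω t
  mono : MonotoneOn ω (Set.Icc 0 2)
  div_anti : AntitoneOn (fun t => ω t / t) (Set.Ioc 0 2)

def IsRegularMajorant (ω : ℝ → ℝ) : Prop :=
  IsMajorant ω ∧ ∃ C > 0, ∀ x : ℝ, 0 < x → x < 2 →
    (∫ t in (0:ℝ)..x, ω t / t) + x * (∫ t in x..(2:ℝ), ω t / t ^ 2) ≤ C * ω x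

def SliceRegularOn (f : ℍ → ℍ) (a : ℕ → ℍ) : Prop :=
  (∀ r : ℝ, 0 ≤ r → r < 1 → Summable (fun n => ‖a n‖ * r ^ n)) ∧
  (∀ q ∈ unitBall, HasSum (fun n => q ^ n * a n) (f q))

def IsSliceRegular (f : ℍ → ℍ) : Prop := ∃ a : ℕ → ℍ, SliceRegularOn f a

def SliceDeriv (f f' : ℍ → ℍ) (a : ℕ → ℍ) : Prop :=
  SliceRegularOn f a ∧
  (∀ q ∈ unitBall, HasSum (fun n => ((n + 1 : ℕ) : ℝ) • (q ^ n * a (n + 1))) (f' q))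

def expI (i : ℍ) (t : ℝ) : ℍ := (Real.cos t : ℍ) + Real.sin t • i

def poisson (i : ℍ) (u : ℍ → ℝ) (q : ℍ) : ℝ :=
  (1 / (2 * Real.pi)) * ∫ t in (0:ℝ)..(2 * Real.pi),
    u (expI i t) * (1 - ‖q‖ ^ 2) / ‖q - expI i t‖ ^ 2

def comp1 (i : ℍ) (f : ℍ → ℍ) : ℍ → ℍ := fun q => (2⁻¹ : ℝ) • (f q - i * f q * i)

def comp2 (i j : ℍ) (f : ℍ → ℍ) : ℍ → ℍ := fun q => ((2⁻¹ : ℝ) • (f q + i * f q * i)) * j⁻¹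

/-! ### Auxiliary lemmas -/

lemma iu_normSq {I : ℍ} (h : IsImaginaryUnit I) :
    I.imI^2 + I.imJ^2 + I.imK^2 = 1 := by
  have h2 : Quaternion.normSq I = 1 := by
    rw [Quaternion.normSq_eq_norm_mul_self, h.2]; ring
  rw [Quaternion.normSq_def'] at h2
  rw [h.1] at h2; nlinarith [h2]

lemma iu_mul_self {I : ℍ} (h : IsImaginaryUnit I) : I * I = -1 := by
  have h1 := iu_normSq h
  have h0 := h.1
  ext <;> simp [Quaternion.re_mul, Quaternion.imI_mul, Quaternion.imJ_mul,
    Quaternion.imK_mul, h0, Quaternion.re_one, Quaternion.imI_one, Quaternion.imJ_one,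
    Quaternion.imK_one] <;> nlinarith [h1]

def phi (I : ℍ) (z : ℂ) : ℍ := (z.re : ℍ) + z.im • I

lemma phi_mul {I : ℍ} (h : IsImaginaryUnit I) (z w : ℂ) :
    phi I (z * w) = phi I z * phi I w := by
  have h1 := iu_normSq h
  have h0 := h.1
  ext
  · simp [phi, Quaternion.re_mul, Complex.mul_re, Complex.mul_im, h0]
    linear_combination (z.im * w.im) * h1
  · simp [phi, Quaternion.imI_mul, Complex.mul_re, Complex.mul_im, h0]; ring
  · simp [phi, Quaternion.imJ_mul, Complex.mul_re, Complex.mul_im, h0]; ring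
  · simp [phi, Quaternion.imK_mul, Complex.mul_re, Complex.mul_im, h0]; ring

lemma phi_one (I : ℍ) : phi I 1 = 1 := by simp [phi]

lemma phi_pow {I : ℍ} (h : IsImaginaryUnit I) (z : ℂ) (n : ℕ) :
    phi I (z ^ n) = (phi I z) ^ n := by
  induction n with
  | zero => simp [phi_one]
  | succ n ih => rw [pow_succ, pow_succ, phi_mul h, ih]

lemma phi_sub (I : ℍ) (z w : ℂ) : phi I z - phi I w = phi I (z - w) := by
  simp [phi, sub_smul]; abel

lemma norm_phi {I : ℍ} (h : IsImaginaryUnit I) (z : ℂ) : ‖phi I z‖ = ‖z‖ := by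
  have h1 := iu_normSq h
  have h0 := h.1
  have hz : ‖z‖ ^ 2 = z.re ^ 2 + z.im ^ 2 := by
    rw [Complex.sq_norm, Complex.normSq_apply]; ring
  have hsq : ‖phi I z‖ ^ 2 = ‖z‖ ^ 2 := by
    rw [sq, ← Quaternion.normSq_eq_norm_mul_self, Quaternion.normSq_def', hz]
    simp [phi, h0]
    linear_combination (z.im ^ 2) * h1
  nlinarith [norm_nonneg (phi I z), norm_nonneg z, hsq]

lemma phi_rep {I i : ℍ} (hI : IsImaginaryUnit I) (hi : IsImaginaryUnit i) (w : ℂ) :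
    phi I w = (2⁻¹ : ℝ) • (phi i w + phi i (starRingEnd ℂ w))
      + (I * (-i)) * ((2⁻¹ : ℝ) • (phi i w - phi i (starRingEnd ℂ w))) := by
  have hii := iu_mul_self hi
  have key : ∀ b : ℝ, (I * (-i)) * (b • i) = b • I := by
    intro b
    rw [mul_smul_comm, mul_assoc, neg_mul, hii, neg_neg, mul_one]
  simp only [phi, Complex.conj_re, Complex.conj_im]
  have e1 : ((w.re : ℍ) + w.im • i) + ((w.re : ℍ) + (-w.im) • i) = ((2 * w.re : ℝ) : ℍ) := by
    ext <;> simp <;> ring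
  have e2 : ((w.re : ℍ) + w.im • i) - ((w.re : ℍ) + (-w.im) • i) = (2 * w.im) • i := by
    ext <;> simp <;> ring
  rw [e1, e2, smul_smul, key, Quaternion.smul_coe]
  ext <;> simp <;> ring

lemma rep_formula {I i : ℍ} (hI : IsImaginaryUnit I) (hi : IsImaginaryUnit i)
    {f : ℍ → ℍ} {a : ℕ → ℍ} (hfa : SliceRegularOn f a) (z : ℂ) (hz : ‖z‖ < 1) :
    f (phi I z) = (2⁻¹ : ℝ) • (f (phi i z) + f (phi i (starRingEnd ℂ z)))
      + (I * (-i)) * ((2⁻¹ : ℝ) • (f (phi i z) - f (phi i (starRingEnd ℂ z)))) := by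
  have hmemI : phi I z ∈ unitBall := by show ‖_‖ < 1; rw [norm_phi hI]; exact hz
  have hmem1 : phi i z ∈ unitBall := by show ‖_‖ < 1; rw [norm_phi hi]; exact hz
  have hmem2 : phi i (starRingEnd ℂ z) ∈ unitBall := by
    show ‖_‖ < 1; rw [norm_phi hi, RCLike.norm_conj]; exact hz
  have SI := hfa.2 _ hmemI
  have S1 := hfa.2 _ hmem1
  have S2 := hfa.2 _ hmem2
  have T : HasSum (fun n => (2⁻¹ : ℝ) • ((phi i z) ^ n * a n + (phi i (starRingEnd ℂ z)) ^ n * a n)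
      + (I * (-i)) * ((2⁻¹ : ℝ) • ((phi i z) ^ n * a n - (phi i (starRingEnd ℂ z)) ^ n * a n)))
      ((2⁻¹ : ℝ) • (f (phi i z) + f (phi i (starRingEnd ℂ z)))
      + (I * (-i)) * ((2⁻¹ : ℝ) • (f (phi i z) - f (phi i (starRingEnd ℂ z))))) :=
    ((S1.add S2).const_smul _).add (((S1.sub S2).const_smul _).mul_left _)
  refine SI.unique ?_
  convert T using 2 with n
  rw [← phi_pow hI, ← phi_pow hi, ← phi_pow hi, ← map_pow, phi_rep hI hi (z ^ n)]
  rw [map_pow]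
  rw [add_mul, smul_mul_assoc, mul_assoc, smul_mul_assoc, sub_mul, add_mul]

/-- the slice complex coordinate of a quaternion -/
def zC (p : ℍ) : ℂ := ⟨p.re, ‖p.im‖⟩

open Classical in
def IU (i p : ℍ) : ℍ := if p.im = 0 then i else ‖p.im‖⁻¹ • p.im

lemma IU_unit {i : ℍ} (hi : IsImaginaryUnit i) (p : ℍ) : IsImaginaryUnit (IU i p) := by
  unfold IU
  by_cases h : p.im = 0
  · rw [if_pos h]; exact hi
  · rw [if_neg h]
    constructor
    · simp [Quaternion.re_smul]
    · rw [norm_smul, norm_inv, norm_norm, inv_mul_cancel₀ (norm_ne_zero_iff.mpr h)]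

lemma phi_IU (i p : ℍ) : phi (IU i p) (zC p) = p := by
  unfold phi IU zC
  by_cases h : p.im = 0
  · rw [if_pos h, h, norm_zero, zero_smul, add_zero]
    conv_rhs => rw [← Quaternion.re_add_im p, h, add_zero]
  · rw [if_neg h]
    rw [smul_smul, mul_inv_cancel₀ (norm_ne_zero_iff.mpr h), one_smul]
    exact Quaternion.re_add_im p

lemma norm_sq_decomp (a : ℍ) : ‖a‖ ^ 2 = a.re ^ 2 + ‖a.im‖ ^ 2 := by
  have h1 : ‖a‖ ^ 2 = Quaternion.normSq a := by
    rw [sq, ← Quaternion.normSq_eq_norm_mul_self]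
  have h2 : ‖a.im‖ ^ 2 = Quaternion.normSq a.im := by
    rw [sq, ← Quaternion.normSq_eq_norm_mul_self]
  rw [h1, h2, Quaternion.normSq_def', Quaternion.normSq_def']
  simp
  ring

lemma norm_zC {i : ℍ} (hi : IsImaginaryUnit i) (p : ℍ) : ‖zC p‖ = ‖p‖ := by
  rw [← phi_IU i p, norm_phi (IU_unit hi p), phi_IU]

lemma norm_im_le (a : ℍ) : ‖a.im‖ ≤ ‖a‖ := by
  nlinarith [norm_sq_decomp a, norm_nonneg a, norm_nonneg a.im, sq_nonneg a.re]

lemma sub_im (p q : ℍ) : (p - q).im = p.im - q.im := by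
  ext <;> simp

lemma zC_dist (p q : ℍ) : ‖zC p - zC q‖ ≤ ‖p - q‖ := by
  have h1 : ‖zC p - zC q‖ ^ 2 = (p.re - q.re) ^ 2 + (‖p.im‖ - ‖q.im‖) ^ 2 := by
    rw [Complex.sq_norm, Complex.normSq_apply]
    simp [zC]; ring
  have h2 : ‖p - q‖ ^ 2 = (p.re - q.re) ^ 2 + ‖p.im - q.im‖ ^ 2 := by
    rw [norm_sq_decomp, sub_im]; simp
  have h3 : |‖p.im‖ - ‖q.im‖| ≤ ‖p.im - q.im‖ := abs_norm_sub_norm_le _ _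
  nlinarith [norm_nonneg (zC p - zC q), norm_nonneg (p - q), abs_nonneg (‖p.im‖ - ‖q.im‖),
    sq_abs (‖p.im‖ - ‖q.im‖), norm_nonneg (p.im - q.im)]

lemma IU_dist {i : ℍ} (hi : IsImaginaryUnit i) (p q : ℍ) :
    ‖IU i p - IU i q‖ * ‖q.im‖ ≤ 2 * ‖p - q‖ := by
  have him : ‖p.im - q.im‖ ≤ ‖p - q‖ := by
    rw [← sub_im]; exact norm_im_le _
  have hdy : |‖p.im‖ - ‖q.im‖| ≤ ‖p.im - q.im‖ := abs_norm_sub_norm_le _ _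
  have hq1 : ‖q.im‖ • IU i q = q.im := by
    unfold IU
    by_cases h : q.im = 0
    · rw [if_pos h, h, norm_zero, zero_smul]
    · rw [if_neg h, smul_smul, mul_inv_cancel₀ (norm_ne_zero_iff.mpr h), one_smul]
  have hIp : ‖IU i p‖ = 1 := (IU_unit hi p).2
  calc ‖IU i p - IU i q‖ * ‖q.im‖ = ‖‖q.im‖ • (IU i p - IU i q)‖ := by
        rw [norm_smul, norm_norm]; ring
    _ = ‖(‖q.im‖ • IU i p - ‖p.im‖ • IU i p) + (p.im - q.im)‖ := by
        rw [smul_sub, hq1]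
        congr 1
        have hp1 : ‖p.im‖ • IU i p = p.im := by
          unfold IU
          by_cases h : p.im = 0
          · rw [if_pos h, h, norm_zero, zero_smul]
          · rw [if_neg h, smul_smul, mul_inv_cancel₀ (norm_ne_zero_iff.mpr h), one_smul]
        rw [hp1]; abel
    _ ≤ ‖‖q.im‖ • IU i p - ‖p.im‖ • IU i p‖ + ‖p.im - q.im‖ := norm_add_le _ _
    _ = |‖q.im‖ - ‖p.im‖| + ‖p.im - q.im‖ := by
        rw [← sub_smul, norm_smul, hIp, mul_one, Real.norm_eq_abs]
    _ ≤ ‖p.im - q.im‖ + ‖p.im - q.im‖ := by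
        rw [abs_sub_comm]
        exact add_le_add_left hdy _
    _ ≤ 2 * ‖p - q‖ := by linarith

set_option maxHeartbeats 1600000 in
theorem stmt0 (ω₁ ω₂ : ℝ → ℝ) (hω₁ : IsMajorant ω₁) (hω₂ : IsMajorant ω₂)
    (i j : ℍ) (hij : OrthogonalUnits i j)
    (f : ℍ → ℍ) (hf : IsSliceRegular f)
    (C₁ C₂ : ℝ) (hC₁ : 0 < C₁) (hC₂ : 0 < C₂)
    (h1 : ∀ x ∈ sliceDisc i, ∀ y ∈ sliceDisc i,
      ‖comp1 i f x - comp1 i f y‖ ≤ C₁ * ω₁ ‖x - y‖)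
    (h2 : ∀ x ∈ sliceDisc i, ∀ y ∈ sliceDisc i,
      ‖comp2 i j f x - comp2 i j f y‖ ≤ C₂ * ω₂ ‖x - y‖) :
    ∀ p ∈ unitBall, ∀ q ∈ unitBall,
      ‖f p - f q‖ ≤ 6 * max C₁ C₂ * (ω₁ ‖p - q‖ + ω₂ ‖p - q‖) := by
  obtain ⟨a, hfa⟩ := hf
  obtain ⟨hi, hj, -⟩ := hij
  intro p hp q hq
  by_cases hpq : p = q
  · simp [hpq, hω₁.map_zero, hω₂.map_zero]
  set M := max C₁ C₂ with hMdef
  have hM : 0 < M := lt_of_lt_of_le hC₁ (le_max_left _ _)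
  have hp1 : ‖p‖ < 1 := hp
  have hq1 : ‖q‖ < 1 := hq
  have hd0 : 0 < ‖p - q‖ := by rw [norm_pos_iff]; exact sub_ne_zero.mpr hpq
  have hd2 : ‖p - q‖ < 2 := by
    calc ‖p - q‖ ≤ ‖p‖ + ‖q‖ := norm_sub_le _ _
      _ < 2 := by linarith
  have hΩd : 0 ≤ ω₁ ‖p - q‖ + ω₂ ‖p - q‖ :=
    add_nonneg (hω₁.nonneg _ ⟨hd0.le, hd2.le⟩) (hω₂.nonneg _ ⟨hd0.le, hd2.le⟩)
  -- the function itself satisfies the modulus bound on the slice disc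
  have hj0 : j ≠ 0 := by
    intro h
    have h2 := hj.2
    rw [h, norm_zero] at h2
    exact one_ne_zero h2.symm
  have fdec : ∀ u : ℍ, f u = comp1 i f u + comp2 i j f u * j := by
    intro u
    unfold comp1 comp2
    rw [mul_assoc _ j⁻¹ j, inv_mul_cancel₀ hj0, mul_one, ← smul_add, sub_add_add_cancel,
      ← two_smul ℝ, smul_smul]
    norm_num
  have SB : ∀ u ∈ sliceDisc i, ∀ v ∈ sliceDisc i,
      ‖f u - f v‖ ≤ M * (ω₁ ‖u - v‖ + ω₂ ‖u - v‖) := by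
    intro u hu v hv
    have hd' : (0:ℝ) ≤ ‖u - v‖ := norm_nonneg _
    have hd'' : ‖u - v‖ ≤ 2 := by
      calc ‖u - v‖ ≤ ‖u‖ + ‖v‖ := norm_sub_le _ _
        _ ≤ 2 := by have := hu.2; have := hv.2; linarith
    have hw1 : 0 ≤ ω₁ ‖u - v‖ := hω₁.nonneg _ ⟨hd', hd''⟩
    have hw2 : 0 ≤ ω₂ ‖u - v‖ := hω₂.nonneg _ ⟨hd', hd''⟩
    have e : f u - f v = (comp1 i f u - comp1 i f v) + (comp2 i j f u - comp2 i j f v) * j := by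
      rw [fdec u, fdec v, sub_mul]; abel
    calc ‖f u - f v‖
        ≤ ‖comp1 i f u - comp1 i f v‖ + ‖(comp2 i j f u - comp2 i j f v) * j‖ := by
          rw [e]; exact norm_add_le _ _
      _ = ‖comp1 i f u - comp1 i f v‖ + ‖comp2 i j f u - comp2 i j f v‖ := by
          rw [norm_mul, hj.2, mul_one]
      _ ≤ C₁ * ω₁ ‖u - v‖ + C₂ * ω₂ ‖u - v‖ := add_le_add (h1 u hu v hv) (h2 u hu v hv)
      _ ≤ M * ω₁ ‖u - v‖ + M * ω₂ ‖u - v‖ := by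
          gcongr <;> [exact le_max_left _ _; exact le_max_right _ _]
      _ = M * (ω₁ ‖u - v‖ + ω₂ ‖u - v‖) := by ring
  have momega : ∀ s t : ℝ, 0 ≤ s → s ≤ t → t ≤ 2 →
      ω₁ s + ω₂ s ≤ ω₁ t + ω₂ t := fun s t hs hst ht2 =>
    add_le_add (hω₁.mono ⟨hs, hst.trans ht2⟩ ⟨hs.trans hst, ht2⟩ hst)
      (hω₂.mono ⟨hs, hst.trans ht2⟩ ⟨hs.trans hst, ht2⟩ hst)
  have mem_slice : ∀ z : ℂ, ‖z‖ < 1 → phi i z ∈ sliceDisc i := fun z hz =>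
    ⟨⟨z.re, z.im, rfl⟩, by rw [norm_phi hi]; exact hz⟩
  set Ip := IU i p with hIpdef
  set Iq := IU i q with hIqdef
  have hIp : IsImaginaryUnit Ip := IU_unit hi p
  have hIq : IsImaginaryUnit Iq := IU_unit hi q
  have hzp : ‖zC p‖ < 1 := by rw [norm_zC hi]; exact hp1
  have hzq : ‖zC q‖ < 1 := by rw [norm_zC hi]; exact hq1
  have hzpc : ‖starRingEnd ℂ (zC p)‖ < 1 := by rw [RCLike.norm_conj]; exact hzp
  have hzqc : ‖starRingEnd ℂ (zC q)‖ < 1 := by rw [RCLike.norm_conj]; exact hzq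
  have hu1 := mem_slice _ hzp
  have hu2 := mem_slice _ hzpc
  have hv1 := mem_slice _ hzq
  have hv2 := mem_slice _ hzqc
  set FA := f (phi i (zC p))
  set FB := f (phi i (starRingEnd ℂ (zC p)))
  set FC := f (phi i (zC q))
  set FD := f (phi i (starRingEnd ℂ (zC q)))
  -- distances
  have du1 : ‖phi i (zC p) - phi i (zC q)‖ ≤ ‖p - q‖ := by
    rw [phi_sub, norm_phi hi]; exact zC_dist p q
  have du2 : ‖phi i (starRingEnd ℂ (zC p)) - phi i (starRingEnd ℂ (zC q))‖ ≤ ‖p - q‖ := by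
    rw [phi_sub, norm_phi hi, ← map_sub, RCLike.norm_conj]; exact zC_dist p q
  have dv : ‖phi i (zC q) - phi i (starRingEnd ℂ (zC q))‖ = 2 * ‖q.im‖ := by
    rw [phi_sub, norm_phi hi, Complex.sub_conj]
    rw [norm_mul, Complex.norm_I, mul_one, Complex.norm_real, Real.norm_eq_abs]
    have : (zC q).im = ‖q.im‖ := rfl
    rw [this, abs_of_nonneg (by positivity)]
  -- the three estimates
  have E1 : ‖FA - FC‖ ≤ M * (ω₁ ‖p - q‖ + ω₂ ‖p - q‖) := by
    calc ‖FA - FC‖ ≤ M * (ω₁ ‖phi i (zC p) - phi i (zC q)‖ + ω₂ ‖phi i (zC p) - phi i (zC q)‖) :=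
          SB _ hu1 _ hv1
      _ ≤ M * (ω₁ ‖p - q‖ + ω₂ ‖p - q‖) :=
          mul_le_mul_of_nonneg_left (momega _ _ (norm_nonneg _) du1 hd2.le) hM.le
  have E2 : ‖FB - FD‖ ≤ M * (ω₁ ‖p - q‖ + ω₂ ‖p - q‖) := by
    calc ‖FB - FD‖ ≤ M * (ω₁ ‖phi i (starRingEnd ℂ (zC p)) - phi i (starRingEnd ℂ (zC q))‖
          + ω₂ ‖phi i (starRingEnd ℂ (zC p)) - phi i (starRingEnd ℂ (zC q))‖) := SB _ hu2 _ hv2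
      _ ≤ M * (ω₁ ‖p - q‖ + ω₂ ‖p - q‖) :=
          mul_le_mul_of_nonneg_left (momega _ _ (norm_nonneg _) du2 hd2.le) hM.le
  have E3 : ‖FC - FD‖ ≤ M * (ω₁ (2 * ‖q.im‖) + ω₂ (2 * ‖q.im‖)) := by
    have := SB _ hv1 _ hv2
    rwa [dv] at this
  have hyim : ‖q.im‖ < 1 := lt_of_le_of_lt (norm_im_le q) hq1
  have EK : ‖Ip - Iq‖ * ‖FC - FD‖ ≤ 4 * (M * (ω₁ ‖p - q‖ + ω₂ ‖p - q‖)) := by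
    have hIpq2 : ‖Ip - Iq‖ ≤ 2 := by
      calc ‖Ip - Iq‖ ≤ ‖Ip‖ + ‖Iq‖ := norm_sub_le _ _
        _ = 2 := by rw [hIp.2, hIq.2]; norm_num
    rcases le_or_gt (2 * ‖q.im‖) ‖p - q‖ with hcase | hcase
    · have E3' : ‖FC - FD‖ ≤ M * (ω₁ ‖p - q‖ + ω₂ ‖p - q‖) :=
        E3.trans (mul_le_mul_of_nonneg_left (momega _ _ (by positivity) hcase hd2.le) hM.le)
      calc ‖Ip - Iq‖ * ‖FC - FD‖ ≤ 2 * (M * (ω₁ ‖p - q‖ + ω₂ ‖p - q‖)) :=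
            mul_le_mul hIpq2 E3' (norm_nonneg _) (by norm_num)
        _ ≤ 4 * (M * (ω₁ ‖p - q‖ + ω₂ ‖p - q‖)) := by nlinarith [mul_nonneg hM.le hΩd]
    · have hy0 : 0 < ‖q.im‖ := by linarith
      have hy2 : 2 * ‖q.im‖ ≤ 2 := by linarith
      have anti₁ := hω₁.div_anti ⟨hd0, hd2.le⟩ ⟨by linarith, hy2⟩ hcase.le
      have anti₂ := hω₂.div_anti ⟨hd0, hd2.le⟩ ⟨by linarith, hy2⟩ hcase.le
      simp only [div_le_div_iff₀ (by linarith : (0:ℝ) < 2 * ‖q.im‖) hd0] at anti₁ anti₂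
      -- anti : ω (2y) * d ≤ ω d * (2y)
      have hΩc : (ω₁ (2 * ‖q.im‖) + ω₂ (2 * ‖q.im‖)) * ‖p - q‖
          ≤ 2 * ‖q.im‖ * (ω₁ ‖p - q‖ + ω₂ ‖p - q‖) := by linarith
      have hIy : ‖Ip - Iq‖ * ‖q.im‖ ≤ 2 * ‖p - q‖ := IU_dist hi p q
      have e0 : (0:ℝ) ≤ ‖Ip - Iq‖ := norm_nonneg _
      have key : ‖Ip - Iq‖ * ‖FC - FD‖ * ‖p - q‖
          ≤ 4 * (M * (ω₁ ‖p - q‖ + ω₂ ‖p - q‖)) * ‖p - q‖ := by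
        calc ‖Ip - Iq‖ * ‖FC - FD‖ * ‖p - q‖
            ≤ ‖Ip - Iq‖ * (M * (ω₁ (2 * ‖q.im‖) + ω₂ (2 * ‖q.im‖))) * ‖p - q‖ := by
              apply mul_le_mul_of_nonneg_right _ hd0.le
              exact mul_le_mul_of_nonneg_left E3 e0
          _ = M * (‖Ip - Iq‖ * ((ω₁ (2 * ‖q.im‖) + ω₂ (2 * ‖q.im‖)) * ‖p - q‖)) := by ring
          _ ≤ M * (‖Ip - Iq‖ * (2 * ‖q.im‖ * (ω₁ ‖p - q‖ + ω₂ ‖p - q‖))) := by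
              apply mul_le_mul_of_nonneg_left (mul_le_mul_of_nonneg_left hΩc e0) hM.le
          _ = 2 * (‖Ip - Iq‖ * ‖q.im‖) * M * (ω₁ ‖p - q‖ + ω₂ ‖p - q‖) := by ring
          _ ≤ 2 * (2 * ‖p - q‖) * M * (ω₁ ‖p - q‖ + ω₂ ‖p - q‖) := by
              apply mul_le_mul_of_nonneg_right _ hΩd
              apply mul_le_mul_of_nonneg_right _ hM.le
              linarith
          _ = 4 * (M * (ω₁ ‖p - q‖ + ω₂ ‖p - q‖)) * ‖p - q‖ := by ring
      exact le_of_mul_le_mul_right key hd0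
  -- representation
  have rep_p : f p = (2⁻¹ : ℝ) • (FA + FB) + (Ip * (-i)) * ((2⁻¹ : ℝ) • (FA - FB)) := by
    have := rep_formula hIp hi hfa (zC p) hzp
    rwa [phi_IU] at this
  have rep_q : f q = (2⁻¹ : ℝ) • (FC + FD) + (Iq * (-i)) * ((2⁻¹ : ℝ) • (FC - FD)) := by
    have := rep_formula hIq hi hfa (zC q) hzq
    rwa [phi_IU] at this
  have decomp : f p - f q = (2⁻¹ : ℝ) • ((FA + FB) - (FC + FD))
      + (Ip * (-i)) * ((2⁻¹ : ℝ) • ((FA - FB) - (FC - FD)))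
      + ((Ip - Iq) * (-i)) * ((2⁻¹ : ℝ) • (FC - FD)) := by
    rw [rep_p, rep_q]
    simp only [smul_sub, smul_add, mul_sub, sub_mul]
    abel
  have hnormhalf : ‖(2⁻¹ : ℝ)‖ = 2⁻¹ := by rw [Real.norm_eq_abs]; norm_num
  have nIpi : ‖Ip * (-i)‖ = 1 := by rw [norm_mul, norm_neg, hIp.2, hi.2, mul_one]
  have nT1 : ‖(2⁻¹ : ℝ) • ((FA + FB) - (FC + FD))‖ ≤ M * (ω₁ ‖p - q‖ + ω₂ ‖p - q‖) := by
    have e : (FA + FB) - (FC + FD) = (FA - FC) + (FB - FD) := by abel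
    rw [norm_smul, hnormhalf, e]
    calc 2⁻¹ * ‖(FA - FC) + (FB - FD)‖ ≤ 2⁻¹ * (‖FA - FC‖ + ‖FB - FD‖) := by
          apply mul_le_mul_of_nonneg_left (norm_add_le _ _); norm_num
      _ ≤ M * (ω₁ ‖p - q‖ + ω₂ ‖p - q‖) := by linarith
  have nT2 : ‖(Ip * (-i)) * ((2⁻¹ : ℝ) • ((FA - FB) - (FC - FD)))‖
      ≤ M * (ω₁ ‖p - q‖ + ω₂ ‖p - q‖) := by
    have e : (FA - FB) - (FC - FD) = (FA - FC) - (FB - FD) := by abel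
    rw [norm_mul, nIpi, one_mul, norm_smul, hnormhalf, e]
    calc 2⁻¹ * ‖(FA - FC) - (FB - FD)‖ ≤ 2⁻¹ * (‖FA - FC‖ + ‖FB - FD‖) := by
          apply mul_le_mul_of_nonneg_left (norm_sub_le _ _); norm_num
      _ ≤ M * (ω₁ ‖p - q‖ + ω₂ ‖p - q‖) := by linarith
  have nT3 : ‖((Ip - Iq) * (-i)) * ((2⁻¹ : ℝ) • (FC - FD))‖
      ≤ 2 * (M * (ω₁ ‖p - q‖ + ω₂ ‖p - q‖)) := by
    rw [norm_mul, norm_mul, norm_neg, hi.2, mul_one, norm_smul, hnormhalf]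
    calc ‖Ip - Iq‖ * (2⁻¹ * ‖FC - FD‖) = 2⁻¹ * (‖Ip - Iq‖ * ‖FC - FD‖) := by ring
      _ ≤ 2⁻¹ * (4 * (M * (ω₁ ‖p - q‖ + ω₂ ‖p - q‖))) := by
          apply mul_le_mul_of_nonneg_left EK; norm_num
      _ = 2 * (M * (ω₁ ‖p - q‖ + ω₂ ‖p - q‖)) := by ring
  calc ‖f p - f q‖ ≤ ‖(2⁻¹ : ℝ) • ((FA + FB) - (FC + FD))‖
        + ‖(Ip * (-i)) * ((2⁻¹ : ℝ) • ((FA - FB) - (FC - FD)))‖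
        + ‖((Ip - Iq) * (-i)) * ((2⁻¹ : ℝ) • (FC - FD))‖ := by
        rw [decomp]; exact norm_add₃_le
    _ ≤ 4 * (M * (ω₁ ‖p - q‖ + ω₂ ‖p - q‖)) := by linarith
    _ ≤ 6 * M * (ω₁ ‖p - q‖ + ω₂ ‖p - q‖) := by nlinarith [mul_nonneg hM.le hΩd]
end
end

section
/- Let ω be a majorant, i an imaginary unit, and f a slice regular function on D⁴. If there exists C > 0 such that ‖f(x) − f(y)‖ ≤ C·ω(‖x − y‖) for all x, y ∈ D_i, then there exists L > 0 such that ‖f(p) − f(q)‖ ≤ L·ω(‖p − q‖) for all p, q ∈ D⁴. In other words, a slice regular function that is ω-Lipschitz on one slice disc is ω-Lipschitz on the whole unit ball. -/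
noncomputable section

lemma normSq_one' {J : ℍ} (hJ : IsImaginaryUnit J) : Quaternion.normSq J = 1 := by
  have := Quaternion.normSq_eq_norm_mul_self (a := J)
  rw [hJ.2] at this; simpa using this

lemma imUnit_sq {J : ℍ} (hJ : IsImaginaryUnit J) : J * J = -1 := by
  have h1 : star J = -J := Quaternion.star_eq_neg.2 hJ.1
  have h2 : J * star J = ((Quaternion.normSq J : ℝ) : ℍ) := Quaternion.self_mul_star J
  rw [h1, normSq_one' hJ, mul_neg] at h2
  simpa [neg_eq_iff_eq_neg] using h2

lemma norm_sq_xyJ {J : ℍ} (hJ : IsImaginaryUnit J) (x y : ℝ) :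
    ‖(x:ℍ) + y • J‖^2 = x^2 + y^2 := by
  have hn : J.re^2 + J.imI^2 + J.imJ^2 + J.imK^2 = 1 := by
    have := normSq_one' hJ
    rwa [Quaternion.normSq_def'] at this
  rw [hJ.1] at hn
  have h2 : Quaternion.normSq ((x:ℍ) + y • J) = x^2 + y^2 := by
    rw [Quaternion.normSq_def']
    simp [hJ.1]
    ring_nf
    nlinarith [hn]
  have h3 := Quaternion.normSq_eq_norm_mul_self (a := (x:ℍ) + y • J)
  rw [h2] at h3
  rw [sq]; exact h3.symm

/-- embedding of ℂ into the slice of J -/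
def emb (J : ℍ) (z : ℂ) : ℍ := (z.re : ℍ) + z.im • J

lemma emb_mul {J : ℍ} (hJ : IsImaginaryUnit J) (z w : ℂ) :
    emb J (z * w) = emb J z * emb J w := by
  have hJJ := imUnit_sq hJ
  unfold emb
  simp only [Complex.mul_re, Complex.mul_im, ← Quaternion.coe_mul_eq_smul]
  have e1 : ((z.im:ℍ) * J) * ((w.im:ℍ) * J) = (z.im:ℍ) * ((w.im:ℍ) * (J * J)) := by
    rw [mul_assoc]; congr 1
    rw [← mul_assoc, ← Quaternion.coe_commutes, mul_assoc]
  have e2 : ((z.im:ℍ) * J) * (w.re:ℍ) = (z.im:ℍ) * ((w.re:ℍ) * J) := by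
    rw [mul_assoc]; congr 1; exact (Quaternion.coe_commutes w.re J).symm
  push_cast
  rw [add_mul, mul_add, add_mul, add_mul, e1, e2, hJJ]
  noncomm_ring

lemma emb_pow {J : ℍ} (hJ : IsImaginaryUnit J) (z : ℂ) (n : ℕ) :
    emb J (z ^ n) = (emb J z) ^ n := by
  induction n with
  | zero => simp [emb]
  | succ n ih => rw [pow_succ, pow_succ, emb_mul hJ, ih]

lemma norm_emb {J : ℍ} (hJ : IsImaginaryUnit J) (z : ℂ) : ‖emb J z‖ = ‖z‖ := by
  have h1 : ‖emb J z‖^2 = ‖z‖^2 := by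
    unfold emb
    rw [norm_sq_xyJ hJ, Complex.sq_norm, Complex.normSq_apply]
    ring
  nlinarith [norm_nonneg (emb J z), norm_nonneg z]

/-- the two component sums -/
def SA (a : ℕ → ℍ) (z : ℂ) : ℍ := ∑' n, (z ^ n).re • a n
def SB (a : ℕ → ℍ) (z : ℂ) : ℍ := ∑' n, (z ^ n).im • a n

lemma rep {f : ℍ → ℍ} {a : ℕ → ℍ} (h : SliceRegularOn f a) {J : ℍ}
    (hJ : IsImaginaryUnit J) (z : ℂ) (hz : ‖z‖ < 1) :
    f (emb J z) = SA a z + J * SB a z := by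
  have hr := h.1 ‖z‖ (norm_nonneg z) hz
  have hA : Summable (fun n => (z ^ n).re • a n) := by
    apply Summable.of_norm_bounded hr
    intro n
    rw [norm_smul, mul_comm]
    have : ‖(z^n).re‖ ≤ ‖z‖^n := by
      calc ‖(z^n).re‖ ≤ ‖z^n‖ := Complex.abs_re_le_norm _
        _ = ‖z‖^n := norm_pow z n
    exact mul_le_mul_of_nonneg_left this (norm_nonneg _)
  have hB : Summable (fun n => (z ^ n).im • a n) := by
    apply Summable.of_norm_bounded hr
    intro n
    rw [norm_smul, mul_comm]
    have : ‖(z^n).im‖ ≤ ‖z‖^n := by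
      calc ‖(z^n).im‖ ≤ ‖z^n‖ := Complex.abs_im_le_norm _
        _ = ‖z‖^n := norm_pow z n
    exact mul_le_mul_of_nonneg_left this (norm_nonneg _)
  have hsum : HasSum (fun n => (z ^ n).re • a n + J * ((z ^ n).im • a n))
      (SA a z + J * SB a z) := hA.hasSum.add (hB.hasSum.mul_left J)
  have hmem : emb J z ∈ unitBall := by
    simp only [unitBall, Set.mem_setOf_eq, norm_emb hJ]; exact hz
  have hf := h.2 (emb J z) hmem
  have heq : ∀ n, (emb J z) ^ n * a n = (z ^ n).re • a n + J * ((z ^ n).im • a n) := by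
    intro n
    rw [← emb_pow hJ]
    unfold emb
    rw [add_mul, Quaternion.coe_mul_eq_smul, smul_mul_assoc, mul_smul_comm]
  rw [funext heq] at hf
  exact hf.unique hsum

lemma SA_conj (a : ℕ → ℍ) (z : ℂ) : SA a (starRingEnd ℂ z) = SA a z := by
  unfold SA
  congr 1; funext n
  rw [← map_pow, Complex.conj_re]

lemma SB_conj (a : ℕ → ℍ) (z : ℂ) : SB a (starRingEnd ℂ z) = -SB a z := by
  unfold SB
  rw [← tsum_neg]
  congr 1; funext n
  rw [← map_pow, Complex.conj_im, neg_smul]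

lemma conj_mk (x y : ℝ) : starRingEnd ℂ ⟨x, y⟩ = ⟨x, -y⟩ := by
  apply Complex.ext <;> simp

lemma decomp {i : ℍ} (hi : IsImaginaryUnit i) (p : ℍ) :
    ∃ J : ℍ, IsImaginaryUnit J ∧ p = (p.re : ℍ) + ‖p.im‖ • J := by
  by_cases him : p.im = 0
  · refine ⟨i, hi, ?_⟩
    rw [him, norm_zero, zero_smul, add_zero]
    conv_lhs => rw [← Quaternion.re_add_im p]
    rw [him, add_zero]
  · have hne : ‖p.im‖ ≠ 0 := norm_ne_zero_iff.2 him
    refine ⟨‖p.im‖⁻¹ • p.im, ⟨?_, ?_⟩, ?_⟩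
    · simp [Quaternion.re_im]
    · rw [norm_smul]
      simp [abs_of_nonneg (inv_nonneg.2 (norm_nonneg p.im)), inv_mul_cancel₀ hne]
    · rw [smul_smul, mul_inv_cancel₀ hne, one_smul]
      exact (Quaternion.re_add_im p).symm

lemma norm_sq_decomp_s1 (p : ℍ) : ‖p‖^2 = p.re^2 + ‖p.im‖^2 := by
  have h1 : ‖p‖^2 = Quaternion.normSq p := by
    rw [sq, Quaternion.normSq_eq_norm_mul_self]
  have h2 : ‖p.im‖^2 = Quaternion.normSq p.im := by
    rw [sq, Quaternion.normSq_eq_norm_mul_self]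
  rw [h1, h2, Quaternion.normSq_def', Quaternion.normSq_def']
  simp [Quaternion.re_im]
  ring

lemma norm_sub_sq_q (p q : ℍ) : ‖p - q‖^2 = (p.re - q.re)^2 + ‖p.im - q.im‖^2 := by
  rw [norm_sq_decomp_s1 (p - q), Quaternion.re_sub, Quaternion.im_sub]

lemma emb_sub (J : ℍ) (z w : ℂ) : emb J z - emb J w = emb J (z - w) := by
  unfold emb
  rw [Complex.sub_re, Complex.sub_im, Quaternion.coe_sub, sub_smul]
  abel

lemma norm_c_sq (x y : ℝ) : ‖(⟨x,y⟩:ℂ)‖^2 = x^2 + y^2 := by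
  rw [Complex.sq_norm, Complex.normSq_apply]; ring


set_option maxHeartbeats 1000000 in
lemma le_of_sq_le_sq' {a b : ℝ} (ha : 0 ≤ a) (hb : 0 ≤ b) (h : a^2 ≤ b^2) : a ≤ b := by
  nlinarith


set_option maxHeartbeats 1000000 in
theorem stmt1 (ω : ℝ → ℝ) (hω : IsMajorant ω) (i : ℍ) (hi : IsImaginaryUnit i)
    (f : ℍ → ℍ) (hf : IsSliceRegular f)
    (h : ∃ C > 0, ∀ x ∈ sliceDisc i, ∀ y ∈ sliceDisc i,
      ‖f x - f y‖ ≤ C * ω ‖x - y‖) :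
    ∃ L > 0, ∀ p ∈ unitBall, ∀ q ∈ unitBall, ‖f p - f q‖ ≤ L * ω ‖p - q‖ := by
  obtain ⟨C, hC0, hCf⟩ := h
  obtain ⟨a, ha⟩ := hf
  refine ⟨4 * C, by positivity, ?_⟩
  intro p hp q hq
  by_cases hpq : p = q
  · subst hpq
    simp [sub_self, norm_zero, hω.map_zero]
  have hp1 : ‖p‖ < 1 := hp
  have hq1 : ‖q‖ < 1 := hq
  set xp := p.re with hxp
  set yp := ‖p.im‖ with hyp
  set xq := q.re with hxq
  set yq := ‖q.im‖ with hyq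
  obtain ⟨Jp, hJp, hpe⟩ := decomp hi p
  obtain ⟨Jq, hJq, hqe⟩ := decomp hi q
  have hyp0 : (0:ℝ) ≤ yp := norm_nonneg _
  have hyq0 : (0:ℝ) ≤ yq := norm_nonneg _
  have hpsq : xp^2 + yp^2 < 1 := by
    have := norm_sq_decomp_s1 p
    nlinarith [norm_nonneg p]
  have hqsq : xq^2 + yq^2 < 1 := by
    have := norm_sq_decomp_s1 q
    nlinarith [norm_nonneg q]
  set zp : ℂ := ⟨xp, yp⟩ with hzp
  set zq : ℂ := ⟨xq, yq⟩ with hzq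
  have hnzp : ‖zp‖ < 1 := by
    have := norm_c_sq xp yp
    nlinarith [norm_nonneg zp]
  have hnzq : ‖zq‖ < 1 := by
    have := norm_c_sq xq yq
    nlinarith [norm_nonneg zq]
  have hnzp' : ‖starRingEnd ℂ zp‖ < 1 := by rwa [RCLike.norm_conj]
  have hnzq' : ‖starRingEnd ℂ zq‖ < 1 := by rwa [RCLike.norm_conj]
  -- representation formulas
  have hpemb : p = emb Jp zp := hpe
  have hqemb : q = emb Jq zq := hqe
  have efp : f p = SA a zp + Jp * SB a zp := by rw [hpemb]; exact rep ha hJp zp hnzp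
  have efq : f q = SA a zq + Jq * SB a zq := by rw [hqemb]; exact rep ha hJq zq hnzq
  have ew1 : f (emb i zp) = SA a zp + i * SB a zp := rep ha hi zp hnzp
  have ew2 : f (emb i zq) = SA a zq + i * SB a zq := rep ha hi zq hnzq
  have ew1' : f (emb i (starRingEnd ℂ zp)) = SA a zp - i * SB a zp := by
    rw [rep ha hi _ hnzp', SA_conj, SB_conj, mul_neg, ← sub_eq_add_neg]
  have ew2' : f (emb i (starRingEnd ℂ zq)) = SA a zq - i * SB a zq := by
    rw [rep ha hi _ hnzq', SA_conj, SB_conj, mul_neg, ← sub_eq_add_neg]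
  set u1 := f (emb i zp)
  set u2 := f (emb i zq)
  set u1' := f (emb i (starRingEnd ℂ zp))
  set u2' := f (emb i (starRingEnd ℂ zq))
  set A1 := SA a zp
  set A2 := SA a zq
  set B1 := SB a zp
  set B2 := SB a zq
  -- memberships in the slice disc
  have mem1 : emb i zp ∈ sliceDisc i := ⟨⟨xp, yp, rfl⟩, by rw [norm_emb hi]; exact hnzp⟩
  have mem2 : emb i zq ∈ sliceDisc i := ⟨⟨xq, yq, rfl⟩, by rw [norm_emb hi]; exact hnzq⟩
  have mem1' : emb i (starRingEnd ℂ zp) ∈ sliceDisc i :=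
    ⟨⟨xp, -yp, by rw [conj_mk]; rfl⟩, by rw [norm_emb hi]; exact hnzp'⟩
  have mem2' : emb i (starRingEnd ℂ zq) ∈ sliceDisc i :=
    ⟨⟨xq, -yq, by rw [conj_mk]; rfl⟩, by rw [norm_emb hi]; exact hnzq'⟩
  -- distances
  set d := ‖p - q‖ with hd
  have hd0 : 0 < d := by
    rw [hd]; exact norm_pos_iff.2 (sub_ne_zero.2 hpq)
  have hd2 : d < 2 := by
    calc d ≤ ‖p‖ + ‖q‖ := norm_sub_le p q
      _ < 2 := by linarith
  have himd : ‖p.im - q.im‖ ≤ d := by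
    have h3 := norm_sub_sq_q p q
    exact le_of_sq_le_sq' (norm_nonneg _) (norm_nonneg _)
      (by nlinarith [sq_nonneg (xp - xq)])
  have hyd : |yp - yq| ≤ d := le_trans (abs_norm_sub_norm_le _ _) himd
  have hw12 : ‖emb i zp - emb i zq‖ ≤ d := by
    rw [emb_sub, norm_emb hi]
    have h1 : zp - zq = (⟨xp - xq, yp - yq⟩ : ℂ) := by
      apply Complex.ext <;> simp [hzp, hzq]
    rw [h1]
    have h2 := norm_c_sq (xp - xq) (yp - yq)
    have h3 := norm_sub_sq_q p q
    have h4 : (yp - yq)^2 ≤ ‖p.im - q.im‖^2 := by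
      rw [← sq_abs (yp - yq)]
      exact pow_le_pow_left₀ (abs_nonneg _) (abs_norm_sub_norm_le _ _) 2
    exact le_of_sq_le_sq' (norm_nonneg _) (norm_nonneg _) (by linarith)
  have hw12' : ‖emb i (starRingEnd ℂ zp) - emb i (starRingEnd ℂ zq)‖ ≤ d := by
    rw [emb_sub, norm_emb hi]
    have h1 : starRingEnd ℂ zp - starRingEnd ℂ zq = (⟨xp - xq, -(yp - yq)⟩ : ℂ) := by
      rw [conj_mk, conj_mk]
      apply Complex.ext <;> simp
      ring
    rw [h1]
    have h2 := norm_c_sq (xp - xq) (-(yp - yq))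
    rw [neg_sq] at h2
    have h3 := norm_sub_sq_q p q
    have h4 : (yp - yq)^2 ≤ ‖p.im - q.im‖^2 := by
      rw [← sq_abs (yp - yq)]
      exact pow_le_pow_left₀ (abs_nonneg _) (abs_norm_sub_norm_le _ _) 2
    exact le_of_sq_le_sq' (norm_nonneg _) (norm_nonneg _) (by linarith)
  have hw22' : ‖emb i zq - emb i (starRingEnd ℂ zq)‖ = 2 * yq := by
    rw [emb_sub, norm_emb hi, conj_mk]
    have h1 : zq - (⟨xq, -yq⟩ : ℂ) = ((2 * yq : ℝ) : ℂ) * Complex.I := by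
      apply Complex.ext <;> simp [hzq] <;> ring
    rw [h1, norm_mul, Complex.norm_I, Complex.norm_real, mul_one, Real.norm_eq_abs,
      abs_of_nonneg (by linarith)]
  -- ω facts
  have hdmem : d ∈ Set.Icc (0:ℝ) 2 := ⟨le_of_lt hd0, le_of_lt hd2⟩
  have hωd0 : 0 ≤ ω d := hω.nonneg d hdmem
  have hmono12 : ω ‖emb i zp - emb i zq‖ ≤ ω d :=
    hω.mono ⟨norm_nonneg _, le_trans hw12 hd2.le⟩ hdmem hw12
  have hmono12' : ω ‖emb i (starRingEnd ℂ zp) - emb i (starRingEnd ℂ zq)‖ ≤ ω d :=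
    hω.mono ⟨norm_nonneg _, le_trans hw12' hd2.le⟩ hdmem hw12'
  -- bounds on function differences in the slice
  have hD1 : ‖u1 - u2‖ ≤ C * ω d := by
    calc ‖u1 - u2‖ ≤ C * ω ‖emb i zp - emb i zq‖ := hCf _ mem1 _ mem2
      _ ≤ C * ω d := mul_le_mul_of_nonneg_left hmono12 hC0.le
  have hD1' : ‖u1' - u2'‖ ≤ C * ω d := by
    calc ‖u1' - u2'‖ ≤ C * ω ‖emb i (starRingEnd ℂ zp) - emb i (starRingEnd ℂ zq)‖ :=
        hCf _ mem1' _ mem2'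
      _ ≤ C * ω d := mul_le_mul_of_nonneg_left hmono12' hC0.le
  have hD2 : ‖u2 - u2'‖ ≤ C * ω (2 * yq) := by
    have := hCf _ mem2 _ mem2'
    rwa [hw22'] at this
  -- algebraic identities
  have key : f p - f q = (A1 - A2) + (Jp * (B1 - B2) + (Jp - Jq) * B2) := by
    rw [efp, efq]; noncomm_ring
  have hii : (-i) * i = 1 := by rw [neg_mul, imUnit_sq hi, neg_neg]
  have hA : A1 - A2 = (2⁻¹:ℝ) • ((u1 - u2) + (u1' - u2')) := by
    rw [ew1, ew1', ew2, ew2']; module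
  have hBdiff : B1 - B2 = (-i) * ((2⁻¹:ℝ) • ((u1 - u2) - (u1' - u2'))) := by
    have inner : (u1 - u2) - (u1' - u2') = (2:ℝ) • (i * (B1 - B2)) := by
      rw [ew1, ew1', ew2, ew2', mul_sub]; module
    rw [inner, smul_smul]
    norm_num
    rw [← mul_assoc, imUnit_sq hi, neg_one_mul, neg_neg]
  have hB2e : B2 = (-i) * ((2⁻¹:ℝ) • (u2 - u2')) := by
    have inner : u2 - u2' = (2:ℝ) • (i * B2) := by
      rw [ew2, ew2']; module
    rw [inner, smul_smul]
    norm_num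
    rw [← mul_assoc, imUnit_sq hi, neg_one_mul, neg_neg]
  -- norm bounds of the three terms
  have hni : ‖-i‖ = 1 := by rw [norm_neg, hi.2]
  have T1 : ‖A1 - A2‖ ≤ C * ω d := by
    rw [hA, norm_smul]
    have : ‖(u1 - u2) + (u1' - u2')‖ ≤ 2 * (C * ω d) := by
      calc ‖(u1 - u2) + (u1' - u2')‖ ≤ ‖u1 - u2‖ + ‖u1' - u2'‖ := norm_add_le _ _
        _ ≤ 2 * (C * ω d) := by linarith
    have h5 : ‖(2⁻¹:ℝ)‖ = 2⁻¹ := by norm_num [Real.norm_eq_abs]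
    rw [h5]
    linarith [norm_nonneg ((u1 - u2) + (u1' - u2'))]
  have TB : ‖B1 - B2‖ ≤ C * ω d := by
    rw [hBdiff, norm_mul, hni, one_mul, norm_smul]
    have : ‖(u1 - u2) - (u1' - u2')‖ ≤ 2 * (C * ω d) := by
      calc ‖(u1 - u2) - (u1' - u2')‖ ≤ ‖u1 - u2‖ + ‖u1' - u2'‖ := norm_sub_le _ _
        _ ≤ 2 * (C * ω d) := by linarith
    have h5 : ‖(2⁻¹:ℝ)‖ = 2⁻¹ := by norm_num [Real.norm_eq_abs]
    rw [h5]
    linarith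
  have T2 : ‖Jp * (B1 - B2)‖ ≤ C * ω d := by
    rw [norm_mul, hJp.2, one_mul]; exact TB
  have hB2n : ‖B2‖ ≤ 2⁻¹ * (C * ω (2 * yq)) := by
    rw [hB2e, norm_mul, hni, one_mul, norm_smul]
    have h5 : ‖(2⁻¹:ℝ)‖ = 2⁻¹ := by norm_num [Real.norm_eq_abs]
    rw [h5]
    linarith [hD2]
  have hJJn : ‖Jp - Jq‖ ≤ 2 := by
    calc ‖Jp - Jq‖ ≤ ‖Jp‖ + ‖Jq‖ := norm_sub_le _ _
      _ = 2 := by rw [hJp.2, hJq.2]; norm_num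
  have h2yq2 : 2 * yq ≤ 2 := by nlinarith
  have hω2yq0 : 0 ≤ ω (2 * yq) := hω.nonneg _ ⟨by linarith, h2yq2⟩
  have T3 : ‖(Jp - Jq) * B2‖ ≤ 2 * (C * ω d) := by
    rw [norm_mul]
    by_cases hcase : 2 * yq ≤ d
    · have hmy : ω (2 * yq) ≤ ω d := hω.mono ⟨by linarith, by linarith⟩ hdmem hcase
      calc ‖Jp - Jq‖ * ‖B2‖ ≤ 2 * (2⁻¹ * (C * ω (2 * yq))) := by
            apply mul_le_mul hJJn hB2n (norm_nonneg _) (by norm_num)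
        _ = C * ω (2 * yq) := by ring
        _ ≤ C * ω d := mul_le_mul_of_nonneg_left hmy hC0.le
        _ ≤ 2 * (C * ω d) := by nlinarith
    · push_neg at hcase
      have hyq0' : 0 < yq := by linarith
      have hcross : ω (2 * yq) * d ≤ ω d * (2 * yq) := by
        have := hω.div_anti ⟨hd0, hd2.le⟩ ⟨by linarith, h2yq2⟩ hcase.le
        rw [div_le_div_iff₀ (by linarith) hd0] at this
        linarith
      -- yq * ‖Jp - Jq‖ ≤ 2 * d
      have hpim : yp • Jp = p.im := by
        have h6 : (xp : ℍ) + p.im = p := Quaternion.re_add_im p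
        have h7 : (xp : ℍ) + yp • Jp = p := hpe.symm
        rw [← h6] at h7
        exact add_left_cancel h7
      have hqim : yq • Jq = q.im := by
        have h6 : (xq : ℍ) + q.im = q := Quaternion.re_add_im q
        have h7 : (xq : ℍ) + yq • Jq = q := hqe.symm
        rw [← h6] at h7
        exact add_left_cancel h7
      have hJ2 : yq * ‖Jp - Jq‖ ≤ 2 * d := by
        have e1 : yq • (Jp - Jq) = (yq - yp) • Jp + (yp • Jp - yq • Jq) := by
          rw [smul_sub, sub_smul]; abel
        have e2 : ‖yq • (Jp - Jq)‖ = yq * ‖Jp - Jq‖ := by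
          rw [norm_smul, Real.norm_eq_abs, abs_of_nonneg hyq0]
        have e3 : ‖(yq - yp) • Jp‖ = |yq - yp| := by
          rw [norm_smul, Real.norm_eq_abs, hJp.2, mul_one]
        calc yq * ‖Jp - Jq‖ = ‖yq • (Jp - Jq)‖ := e2.symm
          _ = ‖(yq - yp) • Jp + (yp • Jp - yq • Jq)‖ := by rw [e1]
          _ ≤ ‖(yq - yp) • Jp‖ + ‖yp • Jp - yq • Jq‖ := norm_add_le _ _
          _ = |yq - yp| + ‖p.im - q.im‖ := by rw [e3, hpim, hqim]
          _ ≤ d + d := by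
              have : |yq - yp| = |yp - yq| := abs_sub_comm _ _
              rw [this]; linarith [hyd, himd]
          _ = 2 * d := by ring
      have hstep : ‖Jp - Jq‖ * ω (2 * yq) ≤ 4 * ω d := by
        nlinarith [mul_le_mul_of_nonneg_left hcross (norm_nonneg (Jp - Jq)),
          mul_le_mul_of_nonneg_left hJ2 (mul_nonneg (by norm_num : (0:ℝ) ≤ 2) hωd0)]
      calc ‖Jp - Jq‖ * ‖B2‖ ≤ ‖Jp - Jq‖ * (2⁻¹ * (C * ω (2 * yq))) :=
            mul_le_mul_of_nonneg_left hB2n (norm_nonneg _)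
        _ = 2⁻¹ * C * (‖Jp - Jq‖ * ω (2 * yq)) := by ring
        _ ≤ 2⁻¹ * C * (4 * ω d) := by
            apply mul_le_mul_of_nonneg_left hstep (by positivity)
        _ = 2 * (C * ω d) := by ring
  calc ‖f p - f q‖ = ‖(A1 - A2) + (Jp * (B1 - B2) + (Jp - Jq) * B2)‖ := by rw [key]
    _ ≤ ‖A1 - A2‖ + ‖Jp * (B1 - B2) + (Jp - Jq) * B2‖ := norm_add_le _ _
    _ ≤ ‖A1 - A2‖ + (‖Jp * (B1 - B2)‖ + ‖(Jp - Jq) * B2‖) := by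
        linarith [norm_add_le (Jp * (B1 - B2)) ((Jp - Jq) * B2)]
    _ ≤ C * ω d + (C * ω d + 2 * (C * ω d)) := by linarith
    _ = 4 * C * ω d := by ring
end
end

section
/- Let ω be a majorant, let i, j be imaginary units, and let f be a slice regular function on D⁴. If there is C > 0 with ‖f(x) − f(y)‖ ≤ C·ω(‖x − y‖) for all x, y ∈ D_i, then ‖f(x) − f(y)‖ ≤ 2C·ω(‖x − y‖) for all x, y ∈ D_j. -/
noncomputable section

lemma coe_eq_smul_one (x : ℝ) : (x : ℍ) = x • (1 : ℍ) := by
  have := Quaternion.smul_coe (R := ℝ) x 1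
  simpa using this.symm

lemma slice_mul {u : ℍ} (hu : u * u = -1) (r s a b : ℝ) :
    ((r : ℍ) + s • u) * ((a : ℍ) + b • u) =
      ((r * a - s * b : ℝ) : ℍ) + (r * b + s * a) • u := by
  simp only [add_mul, mul_add, smul_mul_assoc, mul_smul_comm,
    Quaternion.coe_mul_eq_smul, Quaternion.mul_coe_eq_smul, hu, smul_smul,
    coe_eq_smul_one, one_mul, mul_one, smul_neg]
  module

lemma unit_sq {u : ℍ} (hu : IsImaginaryUnit u) : u * u = -1 := by
  have hs : star u = -u := Quaternion.star_eq_neg.mpr hu.1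
  have h1 : u * star u = Quaternion.normSq u := Quaternion.self_mul_star u
  have h2 : Quaternion.normSq u = 1 := by
    rw [Quaternion.normSq_eq_norm_mul_self, hu.2]; norm_num
  rw [hs, h2, mul_neg] at h1
  have := congrArg Neg.neg h1
  simpa using this

lemma pow_slice {u : ℍ} (hu : u * u = -1) (a b : ℝ) (n : ℕ) :
    ((a : ℍ) + b • u) ^ n =
      (((⟨a, b⟩ : ℂ) ^ n).re : ℍ) + ((⟨a, b⟩ : ℂ) ^ n).im • u := by
  induction n with
  | zero => simp
  | succ n ih =>
      rw [pow_succ, ih, slice_mul hu, pow_succ]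
      have h1 : ((⟨a,b⟩:ℂ)^n * ⟨a,b⟩).re = ((⟨a,b⟩:ℂ)^n).re * a - ((⟨a,b⟩:ℂ)^n).im * b := by
        simp [Complex.mul_re]
      have h2 : ((⟨a,b⟩:ℂ)^n * ⟨a,b⟩).im = ((⟨a,b⟩:ℂ)^n).re * b + ((⟨a,b⟩:ℂ)^n).im * a := by
        simp [Complex.mul_im]
      rw [h1, h2]

lemma norm_slice {u : ℍ} (hu : IsImaginaryUnit u) (a b : ℝ) :
    ‖(a : ℍ) + b • u‖ = Real.sqrt (a ^ 2 + b ^ 2) := by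
  have hs : star u = -u := Quaternion.star_eq_neg.mpr hu.1
  have key : Quaternion.normSq ((a : ℍ) + b • u) = a ^ 2 + b ^ 2 := by
    have h1 : ((a : ℍ) + b • u) * star ((a : ℍ) + b • u) =
        Quaternion.normSq ((a : ℍ) + b • u) := Quaternion.self_mul_star _
    have h2 : star ((a : ℍ) + b • u) = (a : ℍ) + (-b) • u := by
      simp [star_add, star_smul, hs, neg_smul]
    rw [h2, slice_mul (unit_sq hu)] at h1
    have h3 : ((a*a - b*(-b) : ℝ) : ℍ) + (a*(-b) + b*a) • u = ((a^2+b^2 : ℝ) : ℍ) := by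
      have : a*(-b) + b*a = 0 := by ring
      rw [this, zero_smul, add_zero]
      push_cast; noncomm_ring
    rw [h3] at h1
    exact_mod_cast congrArg QuaternionAlgebra.re h1.symm
  have h4 : a ^ 2 + b ^ 2 = ‖(a : ℍ) + b • u‖ * ‖(a : ℍ) + b • u‖ := by
    rw [← Quaternion.normSq_eq_norm_mul_self, key]
  rw [h4, Real.sqrt_mul_self (norm_nonneg _)]

lemma key_id {i j : ℍ} (hii : i * i = -1) (α β : ℝ) :
    (α : ℍ) + β • j = (2⁻¹ : ℝ) •
      ((((α:ℍ) + β • i) + ((α:ℍ) + (-β) • i)) -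
        j * i * (((α:ℍ) + β • i) - ((α:ℍ) + (-β) • i))) := by
  have h : ((α:ℍ) + β • i) - ((α:ℍ) + (-β) • i) = (2*β) • i := by module
  rw [h, mul_smul_comm, mul_assoc, hii, mul_neg_one, smul_neg]
  simp only [coe_eq_smul_one]
  module

lemma key_term {i j : ℍ} (hii : i * i = -1) (α β : ℝ) (x : ℍ) :
    ((α : ℍ) + β • j) * x = (2⁻¹ : ℝ) •
      ((((α:ℍ) + β • i) * x + ((α:ℍ) + (-β) • i) * x) -
        j * i * (((α:ℍ) + β • i) * x - ((α:ℍ) + (-β) • i) * x)) := by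
  rw [← sub_mul, ← add_mul, ← mul_assoc, ← sub_mul, ← smul_mul_assoc,
    ← key_id hii]

lemma repr_formula {i j : ℍ} (hi : IsImaginaryUnit i) (hj : IsImaginaryUnit j)
    {f : ℍ → ℍ} {aseq : ℕ → ℍ} (hfa : SliceRegularOn f aseq) (c d : ℝ)
    (hn : ‖(c : ℍ) + d • j‖ < 1) :
    f ((c : ℍ) + d • j) = (2⁻¹ : ℝ) •
      ((f ((c:ℍ) + d • i) + f ((c:ℍ) + (-d) • i)) -
        j * i * (f ((c:ℍ) + d • i) - f ((c:ℍ) + (-d) • i))) := by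
  have hii := unit_sq hi
  have hjj := unit_sq hj
  have hni : ‖(c : ℍ) + d • i‖ < 1 := by
    rw [norm_slice hi]; rw [norm_slice hj] at hn; exact hn
  have hni' : ‖(c : ℍ) + (-d) • i‖ < 1 := by
    rw [norm_slice hi, neg_pow, Even.neg_pow (by norm_num)]
    rw [norm_slice hj] at hn
    simpa using hn
  have h1 := hfa.2 _ hni
  have h2 := hfa.2 _ hni'
  have hq := hfa.2 _ hn
  have hcomb : HasSum (fun n => ((c : ℍ) + d • j) ^ n * aseq n)
      ((2⁻¹ : ℝ) • ((f ((c:ℍ) + d • i) + f ((c:ℍ) + (-d) • i)) -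
        j * i * (f ((c:ℍ) + d • i) - f ((c:ℍ) + (-d) • i)))) := by
    have hsum : HasSum (fun n =>
        (2⁻¹ : ℝ) • ((((c:ℍ) + d • i) ^ n * aseq n + ((c:ℍ) + (-d) • i) ^ n * aseq n) -
          j * i * (((c:ℍ) + d • i) ^ n * aseq n - ((c:ℍ) + (-d) • i) ^ n * aseq n)))
        ((2⁻¹ : ℝ) • ((f ((c:ℍ) + d • i) + f ((c:ℍ) + (-d) • i)) -
          j * i * (f ((c:ℍ) + d • i) - f ((c:ℍ) + (-d) • i)))) :=
      (((h1.add h2).sub ((h1.sub h2).mul_left (j * i))).const_smul _)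
    refine HasSum.congr_fun hsum ?_
    intro n
    have hconj : ((⟨c, -d⟩ : ℂ) ^ n) = (starRingEnd ℂ) ((⟨c, d⟩ : ℂ) ^ n) := by
      have hb : ((⟨c, -d⟩ : ℂ)) = (starRingEnd ℂ) (⟨c, d⟩ : ℂ) := by
        apply Complex.ext <;> simp
      rw [hb, ← map_pow]
    rw [pow_slice hjj, pow_slice hii, pow_slice hii, hconj, Complex.conj_re,
      Complex.conj_im]
    exact key_term hii _ _ _
  exact hq.unique hcomb

lemma slice_sub (u : ℍ) (c d e g : ℝ) :
    ((c : ℍ) + d • u) - ((e : ℍ) + g • u) = ((c - e : ℝ) : ℍ) + (d - g) • u := by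
  push_cast
  module

theorem stmt5 (ω : ℝ → ℝ) (hω : IsMajorant ω)
    (i j : ℍ) (hi : IsImaginaryUnit i) (hj : IsImaginaryUnit j)
    (f : ℍ → ℍ) (hf : IsSliceRegular f) (C : ℝ) (hC : 0 < C)
    (h : ∀ x ∈ sliceDisc i, ∀ y ∈ sliceDisc i, ‖f x - f y‖ ≤ C * ω ‖x - y‖) :
    ∀ x ∈ sliceDisc j, ∀ y ∈ sliceDisc j, ‖f x - f y‖ ≤ 2 * C * ω ‖x - y‖ := by
  obtain ⟨aseq, hfa⟩ := hf
  rintro x ⟨⟨c, d, rfl⟩, hxn⟩ y ⟨⟨e, g, rfl⟩, hyn⟩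
  have hii := unit_sq hi
  have hrx := repr_formula hi hj hfa c d hxn
  have hry := repr_formula hi hj hfa e g hyn
  set A1 := f ((c:ℍ) + d • i) with hA1
  set A2 := f ((c:ℍ) + (-d) • i) with hA2
  set B1 := f ((e:ℍ) + g • i) with hB1
  set B2 := f ((e:ℍ) + (-g) • i) with hB2
  set D1 := A1 - B1 with hD1
  set D2 := A2 - B2 with hD2
  have hD : f ((c:ℍ) + d • j) - f ((e:ℍ) + g • j) =
      (2⁻¹ : ℝ) • ((D1 + D2) - j * i * (D1 - D2)) := by
    rw [hrx, hry, hD1, hD2]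
    simp only [mul_sub, smul_sub, smul_add]
    module
  -- norms of slice points
  have hmemx1 : ((c:ℍ) + d • i) ∈ sliceDisc i := by
    refine ⟨⟨c, d, rfl⟩, ?_⟩
    rw [norm_slice hi]; rw [norm_slice hj] at hxn; exact hxn
  have hmemx2 : ((c:ℍ) + (-d) • i) ∈ sliceDisc i := by
    refine ⟨⟨c, -d, rfl⟩, ?_⟩
    rw [norm_slice hi, neg_pow, Even.neg_pow (by norm_num)]
    rw [norm_slice hj] at hxn; simpa using hxn
  have hmemy1 : ((e:ℍ) + g • i) ∈ sliceDisc i := by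
    refine ⟨⟨e, g, rfl⟩, ?_⟩
    rw [norm_slice hi]; rw [norm_slice hj] at hyn; exact hyn
  have hmemy2 : ((e:ℍ) + (-g) • i) ∈ sliceDisc i := by
    refine ⟨⟨e, -g, rfl⟩, ?_⟩
    rw [norm_slice hi, neg_pow, Even.neg_pow (by norm_num)]
    rw [norm_slice hj] at hyn; simpa using hyn
  -- norm equalities
  have hn1 : ‖((c:ℍ) + d • i) - ((e:ℍ) + g • i)‖ =
      ‖((c:ℍ) + d • j) - ((e:ℍ) + g • j)‖ := by
    rw [slice_sub, slice_sub, norm_slice hi, norm_slice hj]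
  have hn2 : ‖((c:ℍ) + (-d) • i) - ((e:ℍ) + (-g) • i)‖ =
      ‖((c:ℍ) + d • j) - ((e:ℍ) + g • j)‖ := by
    rw [slice_sub, slice_sub, norm_slice hi, norm_slice hj]
    have : (-d - -g) ^ 2 = (d - g) ^ 2 := by ring
    rw [this]
  have b1 : ‖D1‖ ≤ C * ω ‖((c:ℍ) + d • j) - ((e:ℍ) + g • j)‖ := by
    rw [← hn1]; exact h _ hmemx1 _ hmemy1
  have b2 : ‖D2‖ ≤ C * ω ‖((c:ℍ) + d • j) - ((e:ℍ) + g • j)‖ := by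
    rw [← hn2]; exact h _ hmemx2 _ hmemy2
  have hji : ‖j * i‖ = 1 := by rw [norm_mul, hi.2, hj.2, mul_one]
  rw [hD, norm_smul]
  have h5 : ‖(2⁻¹ : ℝ)‖ = 2⁻¹ := by
    rw [Real.norm_eq_abs, abs_of_pos]; norm_num
  rw [h5]
  have h6 : ‖(D1 + D2) - j * i * (D1 - D2)‖ ≤ (‖D1‖ + ‖D2‖) + (‖D1‖ + ‖D2‖) := by
    calc ‖(D1 + D2) - j * i * (D1 - D2)‖
        ≤ ‖D1 + D2‖ + ‖j * i * (D1 - D2)‖ := norm_sub_le _ _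
      _ ≤ (‖D1‖ + ‖D2‖) + (‖D1‖ + ‖D2‖) := by
          rw [norm_mul, hji, one_mul]
          exact add_le_add (norm_add_le _ _) (norm_sub_le _ _)
  nlinarith [norm_nonneg D1, norm_nonneg D2]
end
end

section
/- Let i be an imaginary unit and let f be a slice regular function on D⁴ that is continuous on the closed unit ball of ℍ. For x ∈ D_i set M_x = sup{‖f(y)‖ : y ∈ D_i, ‖y − x‖ ≤ 1 − ‖x‖}. Then for every x ∈ D_i and each choice of sign, (1/2)·(1 − ‖x‖)·‖f′(x) ± i·f′(x)·i‖ + ‖f(x) ± i·f(x)·i‖ ≤ 2·M_x. -/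
noncomputable section

open Metric Complex


noncomputable section

private def pseries (b : ℕ → ℂ) : FormalMultilinearSeries ℂ ℂ ℂ :=
  fun n => ContinuousMultilinearMap.mkPiRing ℂ (Fin n) (b n)

private lemma hasFPS {b : ℕ → ℂ}
    (hsum : ∀ r : ℝ, 0 ≤ r → r < 1 → Summable fun n => ‖b n‖ * r ^ n)
    {G : ℂ → ℂ} (hG : ∀ z : ℂ, ‖z‖ < 1 → HasSum (fun n => z ^ n * b n) (G z)) :
    HasFPowerSeriesOnBall G (pseries b) 0 1 := by
  constructor
  · apply ENNReal.le_of_forall_nnreal_lt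
    intro r hr
    apply FormalMultilinearSeries.le_radius_of_summable
    have : (r:ℝ) < 1 := by exact_mod_cast hr
    simpa [pseries, ContinuousMultilinearMap.norm_mkPiRing] using hsum r r.coe_nonneg this
  · exact zero_lt_one
  · intro y hy
    have hy' : ‖y‖ < 1 := by
      simpa [edist_dist, dist_zero_right, ← ofReal_norm] using hy
    have := hG y hy'
    simpa [pseries, ContinuousMultilinearMap.mkPiRing_apply, zero_add, smul_eq_mul,
      mul_comm] using this

private lemma derivEqAux {b : ℕ → ℂ}
    (hsum : ∀ r : ℝ, 0 ≤ r → r < 1 → Summable fun n => ‖b n‖ * r ^ n)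
    {G G' : ℂ → ℂ} (hG : ∀ z : ℂ, ‖z‖ < 1 → HasSum (fun n => z ^ n * b n) (G z))
    (hG' : ∀ z : ℂ, ‖z‖ < 1 → HasSum (fun n : ℕ => ((n : ℂ) + 1) * z ^ n * b (n + 1)) (G' z))
    {z₀ : ℂ} (h0 : ‖z₀‖ < 1) : deriv G z₀ = G' z₀ := by
  have h := hasFPS hsum hG
  have hmem : z₀ ∈ Metric.eball (0:ℂ) 1 := by
    simpa [edist_dist, dist_zero_right, ← ofReal_norm] using h0
  rcases eq_or_ne z₀ 0 with rfl | hz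
  · have h2 : HasSum (fun n : ℕ => ((n : ℂ) + 1) * (0:ℂ) ^ n * b (n + 1)) (b 1) := by
      have := hasSum_single (f := fun n : ℕ => ((n : ℂ) + 1) * (0:ℂ) ^ n * b (n + 1)) 0
        (by intro n hn; simp [zero_pow hn])
      simpa using this
    have h1 : G' 0 = b 1 := (hG' 0 (by simpa using h0)).unique h2
    have := h.hasFPowerSeriesAt.deriv
    rw [this, h1]
    simp [pseries, ContinuousMultilinearMap.mkPiRing_apply]
  · have hfd := h.fderiv
    have hs := hfd.hasSum hmem
    have hs2 := (ContinuousLinearMap.apply ℂ ℂ z₀).hasSum hs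
    simp only [ContinuousLinearMap.apply_apply] at hs2
    have hdiag : ∀ n : ℕ, (pseries b).derivSeries n (fun _ => z₀) z₀
        = z₀ * (((n:ℂ) + 1) * z₀ ^ n * b (n + 1)) := by
      intro n
      rw [FormalMultilinearSeries.derivSeries_apply_diag]
      simp [pseries, ContinuousMultilinearMap.mkPiRing_apply, pow_succ]
      push_cast
      ring
    rw [funext hdiag] at hs2
    have hs3 := (hG' z₀ h0).mul_left z₀
    have hEq : z₀ * G' z₀ = fderiv ℂ G (0 + z₀) z₀ := hs3.unique hs2
    have : fderiv ℂ G (0 + z₀) z₀ = z₀ * deriv G z₀ := by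
      rw [zero_add]
      calc (fderiv ℂ G z₀) z₀ = (fderiv ℂ G z₀) (z₀ • 1) := by norm_num
        _ = z₀ • (fderiv ℂ G z₀ 1) := map_smul _ _ _
        _ = z₀ * deriv G z₀ := by rw [fderiv_apply_one_eq_deriv, smul_eq_mul]
    rw [this] at hEq
    exact (mul_left_cancel₀ hz hEq).symm


private lemma normSq_identity (M : ℝ) (a w : ℂ) :
    ‖(M:ℂ)^2 - (starRingEnd ℂ) a * w‖^2
      = M^2 * ‖w - a‖^2 + (M^2 - ‖a‖^2) * (M^2 - ‖w‖^2) := by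
  have h1 : ∀ u : ℂ, ‖u‖^2 = u.re^2 + u.im^2 := by
    intro u
    rw [Complex.sq_norm, normSq_apply]; ring
  have h2 : ((M:ℂ)^2) = ((M^2 : ℝ) : ℂ) := by push_cast; ring
  rw [h2]
  simp only [h1, Complex.sub_re, Complex.sub_im, Complex.mul_re, Complex.mul_im,
    Complex.conj_re, Complex.conj_im, Complex.ofReal_re, Complex.ofReal_im]
  ring

private lemma pickLemma {φ : ℂ → ℂ} {z₀ : ℂ} {r M : ℝ} (hr : 0 < r) (hM0 : 0 < M)
    (hd : DifferentiableOn ℂ φ (ball z₀ r))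
    (hb : ∀ z ∈ ball z₀ r, ‖φ z‖ < M) :
    ‖deriv φ z₀‖ ≤ (M ^ 2 - ‖φ z₀‖ ^ 2) / (r * M) := by
  set a : ℂ := φ z₀ with ha_def
  have ha : ‖a‖ < M := hb z₀ (mem_ball_self hr)
  have haM : M ^ 2 - ‖a‖ ^ 2 > 0 := by nlinarith [norm_nonneg a]
  set F : ℂ → ℂ := fun z => (M:ℂ) * (φ z - a) / ((M:ℂ)^2 - (starRingEnd ℂ) a * φ z)
    with hF_def
  have hden : ∀ z ∈ ball z₀ r, ((M:ℂ)^2 - (starRingEnd ℂ) a * φ z) ≠ 0 := by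
    intro z hz h
    have h2 : ‖(M:ℂ)^2 - (starRingEnd ℂ) a * φ z‖^2 = 0 := by rw [h]; simp
    rw [normSq_identity] at h2
    have hz2 := hb z hz
    have hp1 : 0 < M ^ 2 - ‖φ z‖ ^ 2 := by nlinarith [norm_nonneg (φ z)]
    have hp2 := mul_pos haM hp1
    have hp3 : 0 ≤ M ^ 2 * ‖φ z - a‖ ^ 2 := by positivity
    linarith
  -- F maps ball into ball 0 1
  have hF0 : F z₀ = 0 := by simp [hF_def, ← ha_def]
  have hmaps : Set.MapsTo F (ball z₀ r) (ball (F z₀) 1) := by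
    intro z hz
    rw [hF0, mem_ball, dist_zero_right]
    have hnum_lt : ‖(M:ℂ) * (φ z - a)‖^2 < ‖(M:ℂ)^2 - (starRingEnd ℂ) a * φ z‖^2 := by
      rw [normSq_identity]
      have h3 : ‖(M:ℂ) * (φ z - a)‖^2 = M^2 * ‖φ z - a‖^2 := by
        rw [norm_mul, mul_pow, Complex.norm_real, Real.norm_eq_abs, _root_.sq_abs]
      rw [h3]
      have hz2 := hb z hz
      have hp1 : 0 < M ^ 2 - ‖φ z‖ ^ 2 := by nlinarith [norm_nonneg (φ z)]
      have hp2 := mul_pos haM hp1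
      linarith
    have hlt : ‖(M:ℂ) * (φ z - a)‖ < ‖(M:ℂ)^2 - (starRingEnd ℂ) a * φ z‖ :=
      lt_of_pow_lt_pow_left₀ 2 (norm_nonneg _) hnum_lt
    rw [hF_def]
    simp only [norm_div]
    rw [div_lt_one (lt_of_le_of_lt (norm_nonneg _) hlt)]
    exact hlt
  -- differentiability of F on the ball
  have hdF : DifferentiableOn ℂ F (ball z₀ r) := by
    apply DifferentiableOn.div
    · exact (differentiableOn_const _).mul (hd.sub (differentiableOn_const _))
    · exact (differentiableOn_const _).sub ((differentiableOn_const _).mul hd)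
    · exact hden
  -- compute deriv F z₀
  have hφd : HasDerivAt φ (deriv φ z₀) z₀ :=
    ((hd z₀ (mem_ball_self hr)).differentiableAt
      (isOpen_ball.mem_nhds (mem_ball_self hr))).hasDerivAt
  set d : ℂ := deriv φ z₀ with hd_def
  have hden0 : ((M:ℂ)^2 - (starRingEnd ℂ) a * a) ≠ 0 := by
    have := hden z₀ (mem_ball_self hr)
    simpa [← ha_def] using this
  have hFd : HasDerivAt F
      (((M:ℂ) * d * ((M:ℂ)^2 - (starRingEnd ℂ) a * a)
        - (M:ℂ) * (a - a) * (-((starRingEnd ℂ) a * d))) / ((M:ℂ)^2 - (starRingEnd ℂ) a * a)^2) z₀ := by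
    have hnum : HasDerivAt (fun z => (M:ℂ) * (φ z - a)) ((M:ℂ) * d) z₀ := by
      simpa using ((hφd.sub_const a).const_mul (M:ℂ))
    have hdend : HasDerivAt (fun z => (M:ℂ)^2 - (starRingEnd ℂ) a * φ z)
        (-((starRingEnd ℂ) a * d)) z₀ := by
      simpa using ((hφd.const_mul ((starRingEnd ℂ) a)).const_sub ((M:ℂ)^2))
    exact hnum.div hdend hden0
  have hderivF : deriv F z₀ = (M:ℂ) * d / ((M:ℂ)^2 - (starRingEnd ℂ) a * a) := by
    rw [hFd.deriv]
    field_simp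
    ring
  have hschwarz := Complex.norm_deriv_le_div_of_mapsTo_ball hdF (hmaps.mono_right ball_subset_closedBall) hr
  rw [hderivF] at hschwarz
  -- compute the norm
  have hca : ((M:ℂ)^2 - (starRingEnd ℂ) a * a) = (((M^2 - ‖a‖^2 : ℝ)) : ℂ) := by
    rw [Complex.conj_mul']; push_cast; ring
  rw [hca] at hschwarz
  rw [norm_div, norm_mul, Complex.norm_real, Complex.norm_real, Real.norm_eq_abs,
    Real.norm_eq_abs, abs_of_pos hM0, abs_of_pos haM] at hschwarz
  rw [div_le_div_iff₀ haM hr] at hschwarz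
  rw [le_div_iff₀ (by positivity : (0:ℝ) < r * M)]
  nlinarith [norm_nonneg d]

private lemma memEBall {z : ℂ} (h : ‖z‖ < 1) : z ∈ Metric.eball (0:ℂ) 1 := by
  simpa [edist_dist, dist_zero_right, ← ofReal_norm] using h

private lemma keyLemma {b : ℕ → ℂ}
    (hsum : ∀ r : ℝ, 0 ≤ r → r < 1 → Summable fun n => ‖b n‖ * r ^ n)
    {G G' : ℂ → ℂ} (hG : ∀ z : ℂ, ‖z‖ < 1 → HasSum (fun n => z ^ n * b n) (G z))
    (hG' : ∀ z : ℂ, ‖z‖ < 1 → HasSum (fun n : ℕ => ((n : ℂ) + 1) * z ^ n * b (n + 1)) (G' z))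
    {z₀ : ℂ} (h0 : ‖z₀‖ < 1) {M : ℝ}
    (hM : ∀ z : ℂ, ‖z‖ < 1 → ‖z - z₀‖ ≤ 1 - ‖z₀‖ → ‖G z‖ ≤ M) :
    (1 - ‖z₀‖) / 2 * ‖G' z₀‖ + ‖G z₀‖ ≤ M := by
  set r : ℝ := 1 - ‖z₀‖ with hr_def
  have hr : 0 < r := by rw [hr_def]; linarith
  have hGz₀ : ‖G z₀‖ ≤ M := hM z₀ h0 (by simp [hr_def]; exact h0.le)
  have hball : ∀ z ∈ ball z₀ r, ‖z‖ < 1 := by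
    intro z hz
    rw [mem_ball, dist_eq_norm] at hz
    have := norm_sub_norm_le z z₀
    rw [hr_def] at hz
    linarith
  have hdG : DifferentiableOn ℂ G (ball z₀ r) := by
    apply ((hasFPS hsum hG).differentiableOn).mono
    intro z hz
    simpa using memEBall (hball z hz)
  have hder : deriv G z₀ = G' z₀ := derivEqAux hsum hG hG' h0
  refine le_of_forall_pos_le_add ?_
  intro ε hε
  have hMε : 0 < M + ε := by
    have := norm_nonneg (G z₀); linarith
  have hpick := pickLemma hr hMε hdG (fun z hz => by
    have h1 : ‖G z‖ ≤ M := by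
      apply hM z (hball z hz)
      rw [mem_ball, dist_eq_norm] at hz
      exact le_of_lt hz
    linarith)
  rw [hder, le_div_iff₀ (by positivity : (0:ℝ) < r * (M + ε))] at hpick
  nlinarith [sq_nonneg (M + ε - ‖G z₀‖), norm_nonneg (G' z₀), mul_pos hr hMε,
    norm_nonneg (G z₀)]


variable {i : ℍ}
private def qI (i : ℍ) (z : ℂ) : ℍ := (z.re : ℍ) + z.im • i

private def qP (i : ℍ) (q : ℍ) : ℂ :=
  ⟨q.re, i.imI * q.imI + i.imJ * q.imJ + i.imK * q.imK⟩

variable {i : ℍ}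

private lemma hsq_of (hre : i.re = 0) (hnorm : ‖i‖ = 1) :
    i.imI ^ 2 + i.imJ ^ 2 + i.imK ^ 2 = 1 := by
  have h1 : Quaternion.normSq i = ‖i‖ * ‖i‖ := Quaternion.normSq_eq_norm_mul_self i
  rw [hnorm, Quaternion.normSq_def'] at h1
  linear_combination h1 - i.re * hre

private lemma hii_of (hre : i.re = 0) (hnorm : ‖i‖ = 1) : i * i = -1 := by
  have hsq := hsq_of hre hnorm
  ext
  · simp only [Quaternion.re_mul, Quaternion.re_neg, Quaternion.re_one, hre]
    linear_combination -hsq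
  · simp only [Quaternion.imI_mul, Quaternion.imI_neg, Quaternion.imI_one, hre]; ring
  · simp only [Quaternion.imJ_mul, Quaternion.imJ_neg, Quaternion.imJ_one, hre]; ring
  · simp only [Quaternion.imK_mul, Quaternion.imK_neg, Quaternion.imK_one, hre]; ring

private lemma qI_one : qI i 1 = 1 := by
  ext <;> simp [qI]

private lemma qI_sub (z w : ℂ) : qI i (z - w) = qI i z - qI i w := by
  ext <;> simp [qI] <;> ring

private lemma qI_mul (hre : i.re = 0) (hnorm : ‖i‖ = 1) (z w : ℂ) :
    qI i (z * w) = qI i z * qI i w := by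
  have hsq := hsq_of hre hnorm
  ext
  · simp only [qI, Quaternion.re_mul, Quaternion.re_add, Quaternion.re_coe,
      Quaternion.re_smul, Quaternion.imI_add, Quaternion.imI_coe, Quaternion.imI_smul,
      Quaternion.imJ_add, Quaternion.imJ_coe, Quaternion.imJ_smul,
      Quaternion.imK_add, Quaternion.imK_coe, Quaternion.imK_smul,
      Complex.mul_re, Complex.mul_im, smul_eq_mul, hre]
    linear_combination (z.im * w.im) * hsq
  · simp only [qI, Quaternion.imI_mul, Quaternion.re_add, Quaternion.re_coe,
      Quaternion.re_smul, Quaternion.imI_add, Quaternion.imI_coe, Quaternion.imI_smul,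
      Quaternion.imJ_add, Quaternion.imJ_coe, Quaternion.imJ_smul,
      Quaternion.imK_add, Quaternion.imK_coe, Quaternion.imK_smul,
      Complex.mul_re, Complex.mul_im, smul_eq_mul, hre]
    ring
  · simp only [qI, Quaternion.imJ_mul, Quaternion.re_add, Quaternion.re_coe,
      Quaternion.re_smul, Quaternion.imI_add, Quaternion.imI_coe, Quaternion.imI_smul,
      Quaternion.imJ_add, Quaternion.imJ_coe, Quaternion.imJ_smul,
      Quaternion.imK_add, Quaternion.imK_coe, Quaternion.imK_smul,
      Complex.mul_re, Complex.mul_im, smul_eq_mul, hre]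
    ring
  · simp only [qI, Quaternion.imK_mul, Quaternion.re_add, Quaternion.re_coe,
      Quaternion.re_smul, Quaternion.imI_add, Quaternion.imI_coe, Quaternion.imI_smul,
      Quaternion.imJ_add, Quaternion.imJ_coe, Quaternion.imJ_smul,
      Quaternion.imK_add, Quaternion.imK_coe, Quaternion.imK_smul,
      Complex.mul_re, Complex.mul_im, smul_eq_mul, hre]
    ring

private lemma qI_pow (hre : i.re = 0) (hnorm : ‖i‖ = 1) (z : ℂ) (n : ℕ) :
    qI i (z ^ n) = (qI i z) ^ n := by
  induction n with
  | zero => simpa using qI_one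
  | succ n ih => rw [pow_succ, pow_succ, qI_mul hre hnorm, ih]

private lemma norm_qI (hre : i.re = 0) (hnorm : ‖i‖ = 1) (z : ℂ) :
    ‖qI i z‖ = ‖z‖ := by
  have hsq := hsq_of hre hnorm
  have h1 : ‖qI i z‖ * ‖qI i z‖ = ‖z‖ * ‖z‖ := by
    rw [← Quaternion.normSq_eq_norm_mul_self, Quaternion.normSq_def']
    rw [Complex.norm_mul_self_eq_normSq, Complex.normSq_apply]
    simp only [qI, Quaternion.re_add, Quaternion.re_coe, Quaternion.re_smul,
      Quaternion.imI_add, Quaternion.imI_coe, Quaternion.imI_smul,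
      Quaternion.imJ_add, Quaternion.imJ_coe, Quaternion.imJ_smul,
      Quaternion.imK_add, Quaternion.imK_coe, Quaternion.imK_smul, smul_eq_mul, hre]
    linear_combination (z.im ^ 2) * hsq
  exact (mul_self_inj (norm_nonneg _) (norm_nonneg _)).mp h1

private lemma qP_qI (hre : i.re = 0) (hnorm : ‖i‖ = 1) (z : ℂ) :
    qP i (qI i z) = z := by
  have hsq := hsq_of hre hnorm
  refine Complex.ext ?_ ?_
  · simp [qP, qI, hre]
  · simp only [qP, qI, Quaternion.re_add, Quaternion.re_coe, Quaternion.re_smul,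
      Quaternion.imI_add, Quaternion.imI_coe, Quaternion.imI_smul,
      Quaternion.imJ_add, Quaternion.imJ_coe, Quaternion.imJ_smul,
      Quaternion.imK_add, Quaternion.imK_coe, Quaternion.imK_smul, smul_eq_mul, hre]
    linear_combination z.im * hsq

private lemma qI_qP (hre : i.re = 0) (hnorm : ‖i‖ = 1) {q : ℍ}
    (hcomm : i * q = q * i) : qI i (qP i q) = q := by
  have hsq := hsq_of hre hnorm
  have hc1 : i.imJ * q.imK - i.imK * q.imJ = 0 := by
    have h := congrArg QuaternionAlgebra.imI hcomm
    simp only [Quaternion.imI_mul] at h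
    linear_combination h / 2
  have hc2 : i.imK * q.imI - i.imI * q.imK = 0 := by
    have h := congrArg QuaternionAlgebra.imJ hcomm
    simp only [Quaternion.imJ_mul] at h
    linear_combination h / 2
  have hc3 : i.imI * q.imJ - i.imJ * q.imI = 0 := by
    have h := congrArg QuaternionAlgebra.imK hcomm
    simp only [Quaternion.imK_mul] at h
    linear_combination h / 2
  ext
  · simp [qI, qP, hre]
  · simp only [qI, qP, Quaternion.re_add, Quaternion.re_coe, Quaternion.re_smul,
      Quaternion.imI_add, Quaternion.imI_coe, Quaternion.imI_smul,
      Quaternion.imJ_add, Quaternion.imJ_coe, Quaternion.imJ_smul,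
      Quaternion.imK_add, Quaternion.imK_coe, Quaternion.imK_smul, smul_eq_mul, hre]
    linear_combination q.imI * hsq + i.imJ * hc3 - i.imK * hc2
  · simp only [qI, qP, Quaternion.re_add, Quaternion.re_coe, Quaternion.re_smul,
      Quaternion.imI_add, Quaternion.imI_coe, Quaternion.imI_smul,
      Quaternion.imJ_add, Quaternion.imJ_coe, Quaternion.imJ_smul,
      Quaternion.imK_add, Quaternion.imK_coe, Quaternion.imK_smul, smul_eq_mul, hre]
    linear_combination q.imJ * hsq + i.imK * hc1 - i.imI * hc3
  · simp only [qI, qP, Quaternion.re_add, Quaternion.re_coe, Quaternion.re_smul,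
      Quaternion.imI_add, Quaternion.imI_coe, Quaternion.imI_smul,
      Quaternion.imJ_add, Quaternion.imJ_coe, Quaternion.imJ_smul,
      Quaternion.imK_add, Quaternion.imK_coe, Quaternion.imK_smul, smul_eq_mul, hre]
    linear_combination q.imK * hsq + i.imI * hc2 - i.imJ * hc1

private lemma norm_qP (hre : i.re = 0) (hnorm : ‖i‖ = 1) {q : ℍ}
    (hcomm : i * q = q * i) : ‖qP i q‖ = ‖q‖ := by
  conv_rhs => rw [← qI_qP hre hnorm hcomm]
  rw [norm_qI hre hnorm]

private lemma qP_mul_left (hre : i.re = 0) (hnorm : ‖i‖ = 1) (w : ℂ) {q : ℍ}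
    (hcomm : i * q = q * i) : qP i (qI i w * q) = w * qP i q := by
  conv_lhs => rw [← qI_qP hre hnorm hcomm]
  rw [← qI_mul hre hnorm, qP_qI hre hnorm]

private lemma norm_eq_one_of_normSq {j : ℍ} (h : Quaternion.normSq j = 1) : ‖j‖ = 1 := by
  have h1 : ‖j‖ * ‖j‖ = 1 * 1 := by
    rw [← Quaternion.normSq_eq_norm_mul_self, h]; ring
  exact (mul_self_inj (norm_nonneg _) (by norm_num)).mp h1

private lemma exists_j (hre : i.re = 0) (hnorm : ‖i‖ = 1) :
    ∃ j : ℍ, ‖j‖ = 1 ∧ i * j = -(j * i) := by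
  have hsq := hsq_of hre hnorm
  by_cases h : i.imI = 0 ∧ i.imJ = 0
  · obtain ⟨j, hjr, hj1, hj2, hj3⟩ : ∃ j : ℍ, j.re = 0 ∧ j.imI = 1 ∧ j.imJ = 0 ∧ j.imK = 0 :=
      ⟨⟨0, 1, 0, 0⟩, rfl, rfl, rfl, rfl⟩
    refine ⟨j, norm_eq_one_of_normSq (by simp [Quaternion.normSq_def', hjr, hj1, hj2, hj3]), ?_⟩
    ext
    · simp [Quaternion.re_mul, h.1, hjr, hj1, hj2, hj3]
    · simp [Quaternion.imI_mul, hre, hjr, hj1, hj2, hj3]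
    · simp [Quaternion.imJ_mul, hre, h.1, h.2, hjr, hj1, hj2, hj3]
    · simp [Quaternion.imK_mul, hre, h.1, h.2, hjr, hj1, hj2, hj3]
  · obtain ⟨j₀, hjr, hj1, hj2, hj3⟩ :
        ∃ j : ℍ, j.re = 0 ∧ j.imI = -i.imJ ∧ j.imJ = i.imI ∧ j.imK = 0 :=
      ⟨⟨0, -i.imJ, i.imI, 0⟩, rfl, rfl, rfl, rfl⟩
    have hj₀ne : j₀ ≠ 0 := by
      intro hc
      apply h
      constructor
      · have := congrArg QuaternionAlgebra.imJ hc
        simpa [hj2, Quaternion.imJ_zero] using this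
      · have := congrArg QuaternionAlgebra.imI hc
        simpa [hj1, Quaternion.imI_zero] using this
    have hanti : i * j₀ = -(j₀ * i) := by
      ext
      · simp only [Quaternion.re_mul, Quaternion.re_neg, hjr, hj1, hj2, hj3, hre]; ring
      · simp only [Quaternion.imI_mul, Quaternion.imI_neg, hjr, hj1, hj2, hj3, hre]; ring
      · simp only [Quaternion.imJ_mul, Quaternion.imJ_neg, hjr, hj1, hj2, hj3, hre]; ring
      · simp only [Quaternion.imK_mul, Quaternion.imK_neg, hjr, hj1, hj2, hj3, hre]; ring
    refine ⟨‖j₀‖⁻¹ • j₀, ?_, ?_⟩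
    · rw [norm_smul, norm_inv, norm_norm, inv_mul_cancel₀ (norm_ne_zero_iff.mpr hj₀ne)]
    · rw [mul_smul_comm, smul_mul_assoc, hanti, smul_neg]

-- continuation of q1: CLM versions and algebraic identities
private def qPL (i : ℍ) : ℍ →L[ℝ] ℂ :=
  LinearMap.toContinuousLinearMap
    { toFun := qP i
      map_add' := by
        intro p q
        refine Complex.ext ?_ ?_ <;> simp [qP] <;> ring
      map_smul' := by
        intro c q
        refine Complex.ext ?_ ?_ <;>
          simp [qP, Complex.real_smul, Complex.ofReal_mul] <;> ring }

private lemma qPL_apply (i : ℍ) (q : ℍ) : qPL i q = qP i q := rfl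

private lemma qI_comm_i (z : ℂ) : i * qI i z = qI i z * i := by
  ext <;>
    simp only [qI, Quaternion.re_mul, Quaternion.imI_mul, Quaternion.imJ_mul,
      Quaternion.imK_mul, Quaternion.re_add, Quaternion.re_coe, Quaternion.re_smul,
      Quaternion.imI_add, Quaternion.imI_coe, Quaternion.imI_smul,
      Quaternion.imJ_add, Quaternion.imJ_coe, Quaternion.imJ_smul,
      Quaternion.imK_add, Quaternion.imK_coe, Quaternion.imK_smul, smul_eq_mul] <;>
    ring

private lemma mul_triple_left (hii : i * i = -1) (u : ℍ) :
    i * (i * u * i) = -(u * i) := by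
  rw [mul_assoc i u i, ← mul_assoc i i (u * i), hii, neg_one_mul]

private lemma mul_triple_right (hii : i * i = -1) (u : ℍ) :
    (i * u * i) * i = -(i * u) := by
  rw [mul_assoc (i * u) i i, hii, mul_neg_one]

private lemma comm_minus (hii : i * i = -1) (u : ℍ) :
    i * (u - i * u * i) = (u - i * u * i) * i := by
  rw [mul_sub, sub_mul, mul_triple_left hii, mul_triple_right hii]
  abel

private lemma anti_plus (hii : i * i = -1) (u : ℍ) :
    i * (u + i * u * i) = -((u + i * u * i) * i) := by
  rw [mul_add, add_mul, mul_triple_left hii, mul_triple_right hii]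
  abel


private lemma inv_anti {j : ℍ} (hj0 : j ≠ 0) (hanti : i * j = -(j * i)) :
    i * j⁻¹ = -(j⁻¹ * i) := by
  apply mul_left_cancel₀ hj0
  have hji : j * i = -(i * j) := by rw [hanti, neg_neg]
  rw [mul_neg, ← mul_assoc j j⁻¹ i, mul_inv_cancel₀ hj0, one_mul,
    ← mul_assoc j i j⁻¹, hji, neg_mul, mul_assoc i j j⁻¹, mul_inv_cancel₀ hj0, mul_one]

private def comp1L (i : ℍ) : ℍ →L[ℝ] ℍ :=
  LinearMap.toContinuousLinearMap
    { toFun := fun q => (2⁻¹ : ℝ) • (q - i * q * i)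
      map_add' := by
        intro p q
        rw [mul_add, add_mul,
          show p + q - (i * p * i + i * q * i) = (p - i * p * i) + (q - i * q * i) by abel,
          smul_add]
      map_smul' := by
        intro c q
        simp only [RingHom.id_apply, mul_smul_comm, smul_mul_assoc, ← smul_sub,
          smul_comm c (2⁻¹ : ℝ)] }

private def comp2L (i j : ℍ) : ℍ →L[ℝ] ℍ :=
  LinearMap.toContinuousLinearMap
    { toFun := fun q => ((2⁻¹ : ℝ) • (q + i * q * i)) * j⁻¹
      map_add' := by
        intro p q
        rw [mul_add, add_mul,
          show p + q + (i * p * i + i * q * i) = (p + i * p * i) + (q + i * q * i) by abel,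
          smul_add, add_mul]
      map_smul' := by
        intro c q
        simp only [RingHom.id_apply, mul_smul_comm, smul_mul_assoc, ← smul_add,
          smul_comm c (2⁻¹ : ℝ)] }

private lemma comp1L_apply (q : ℍ) : comp1L i q = (2⁻¹ : ℝ) • (q - i * q * i) := rfl
private lemma comp2L_apply (j q : ℍ) : comp2L i j q = ((2⁻¹ : ℝ) • (q + i * q * i)) * j⁻¹ := rfl

private lemma norm_comp1L (q : ℍ) : ‖comp1L i q‖ = 2⁻¹ * ‖q - i * q * i‖ := by
  rw [comp1L_apply, norm_smul, Real.norm_eq_abs, abs_of_pos (by norm_num : (0:ℝ) < 2⁻¹)]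

private lemma norm_comp2L {j : ℍ} (hjn : ‖j‖ = 1) (q : ℍ) :
    ‖comp2L i j q‖ = 2⁻¹ * ‖q + i * q * i‖ := by
  rw [comp2L_apply, norm_mul, norm_inv, hjn, inv_one, mul_one, norm_smul,
    Real.norm_eq_abs, abs_of_pos (by norm_num : (0:ℝ) < 2⁻¹)]

private lemma norm_comp1L_le (hnorm : ‖i‖ = 1) (q : ℍ) : ‖comp1L i q‖ ≤ ‖q‖ := by
  rw [norm_comp1L]
  have h1 : ‖q - i * q * i‖ ≤ ‖q‖ + ‖i * q * i‖ := norm_sub_le _ _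
  have h2 : ‖i * q * i‖ = ‖q‖ := by rw [norm_mul, norm_mul, hnorm, one_mul, mul_one]
  linarith

private lemma norm_comp2L_le (hnorm : ‖i‖ = 1) {j : ℍ} (hjn : ‖j‖ = 1) (q : ℍ) :
    ‖comp2L i j q‖ ≤ ‖q‖ := by
  rw [norm_comp2L hjn]
  have h1 : ‖q + i * q * i‖ ≤ ‖q‖ + ‖i * q * i‖ := norm_add_le _ _
  have h2 : ‖i * q * i‖ = ‖q‖ := by rw [norm_mul, norm_mul, hnorm, one_mul, mul_one]
  linarith

private lemma comp1L_comm (hii : i * i = -1) (u : ℍ) :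
    i * comp1L i u = comp1L i u * i := by
  rw [comp1L_apply, mul_smul_comm, smul_mul_assoc, comm_minus hii]

private lemma comp2L_comm (hii : i * i = -1) {j : ℍ} (hj0 : j ≠ 0)
    (hanti : i * j = -(j * i)) (u : ℍ) :
    i * comp2L i j u = comp2L i j u * i := by
  rw [comp2L_apply, smul_mul_assoc, mul_smul_comm, smul_mul_assoc]
  congr 1
  set A := u + i * u * i with hA
  have h1 : i * A = -(A * i) := anti_plus hii u
  have h2 : i * j⁻¹ = -(j⁻¹ * i) := inv_anti hj0 hanti
  calc i * (A * j⁻¹) = (i * A) * j⁻¹ := by rw [mul_assoc]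
    _ = -(A * i * j⁻¹) := by rw [h1, neg_mul]
    _ = -(A * (i * j⁻¹)) := by rw [mul_assoc]
    _ = A * (j⁻¹ * i) := by rw [h2, mul_neg, neg_neg]
    _ = (A * j⁻¹) * i := by rw [mul_assoc]

private lemma comp1L_equivar (z : ℂ) (u : ℍ) :
    comp1L i (qI i z * u) = qI i z * comp1L i u := by
  rw [comp1L_apply, comp1L_apply, mul_smul_comm]
  congr 1
  have h1 : i * (qI i z * u) * i = qI i z * (i * u * i) := by
    rw [← mul_assoc, qI_comm_i]; simp [mul_assoc]
  rw [h1, mul_sub]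

private lemma comp2L_equivar (j : ℍ) (z : ℂ) (u : ℍ) :
    comp2L i j (qI i z * u) = qI i z * comp2L i j u := by
  rw [comp2L_apply, comp2L_apply]
  have h1 : i * (qI i z * u) * i = qI i z * (i * u * i) := by
    rw [← mul_assoc, qI_comm_i]; simp [mul_assoc]
  rw [h1, ← mul_add, ← mul_smul_comm, mul_assoc]


private lemma main_component {i : ℍ} (hre : i.re = 0) (hnorm : ‖i‖ = 1)
    {f f' : ℍ → ℍ} {a : ℕ → ℍ} (hf : SliceDeriv f f' a)
    (hcont : ContinuousOn f (Metric.closedBall 0 1))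
    (Φ : ℍ →L[ℝ] ℍ)
    (hΦc : ∀ u : ℍ, i * Φ u = Φ u * i)
    (hΦe : ∀ (z : ℂ) (u : ℍ), Φ (qI i z * u) = qI i z * Φ u)
    (hΦn : ∀ u : ℍ, ‖Φ u‖ ≤ ‖u‖)
    {x : ℍ} (hx : x ∈ sliceDisc i) :
    (1 - ‖x‖) / 2 * ‖Φ (f' x)‖ + ‖Φ (f x)‖ ≤
      sSup {r : ℝ | ∃ y ∈ sliceDisc i, ‖y - x‖ ≤ 1 - ‖x‖ ∧ r = ‖f y‖} := by
  obtain ⟨⟨u, v, hx1⟩, hxn⟩ := hx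
  set z₀ : ℂ := ⟨u, v⟩ with hz₀def
  have hxz : x = qI i z₀ := hx1
  have hnx : ‖x‖ = ‖z₀‖ := by rw [hxz, norm_qI hre hnorm]
  have hz₀ : ‖z₀‖ < 1 := by rw [← hnx]; exact hxn
  set S := {r : ℝ | ∃ y ∈ sliceDisc i, ‖y - x‖ ≤ 1 - ‖x‖ ∧ r = ‖f y‖} with hS
  obtain ⟨C, hC⟩ := (isCompact_closedBall (0:ℍ) 1).exists_bound_of_continuousOn hcont
  have hbdd : BddAbove S := by
    refine ⟨C, ?_⟩
    rintro r ⟨y, hy, _, rfl⟩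
    refine hC y ?_
    rw [Metric.mem_closedBall, dist_zero_right]
    exact le_of_lt hy.2
  have hmem : ∀ z : ℂ, ‖z‖ < 1 → qI i z ∈ sliceDisc i := by
    intro z hz
    exact ⟨⟨z.re, z.im, rfl⟩, by rwa [norm_qI hre hnorm]⟩
  set b : ℕ → ℂ := fun n => qP i (Φ (a n)) with hb
  set G : ℂ → ℂ := fun z => qP i (Φ (f (qI i z))) with hG
  set G' : ℂ → ℂ := fun z => qP i (Φ (f' (qI i z))) with hG'
  have hnb : ∀ q : ℍ, ‖qP i (Φ q)‖ = ‖Φ q‖ := fun q => norm_qP hre hnorm (hΦc _)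
  have hsumb : ∀ r : ℝ, 0 ≤ r → r < 1 → Summable fun n => ‖b n‖ * r ^ n := by
    intro r h0 h1
    refine Summable.of_nonneg_of_le (fun n => by positivity) (fun n => ?_) (hf.1.1 r h0 h1)
    rw [hb]
    simp only
    rw [hnb]
    exact mul_le_mul_of_nonneg_right (hΦn _) (by positivity)
  have hterm : ∀ (z : ℂ) (n : ℕ) (w : ℍ),
      qP i (Φ ((qI i z) ^ n * w)) = z ^ n * qP i (Φ w) := by
    intro z n w
    rw [← qI_pow hre hnorm, hΦe, qP_mul_left hre hnorm _ (hΦc _)]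
  have hGsum : ∀ z : ℂ, ‖z‖ < 1 → HasSum (fun n => z ^ n * b n) (G z) := by
    intro z hz
    have h1 := hf.1.2 (qI i z) (by simpa [unitBall, norm_qI hre hnorm] using hz)
    have h2 := ((qPL i).comp Φ).hasSum h1
    simp only [ContinuousLinearMap.comp_apply, qPL_apply] at h2
    simpa only [hterm] using h2
  have hG'sum : ∀ z : ℂ, ‖z‖ < 1 →
      HasSum (fun n : ℕ => ((n : ℂ) + 1) * z ^ n * b (n + 1)) (G' z) := by
    intro z hz
    have h1 := hf.2 (qI i z) (by simpa [unitBall, norm_qI hre hnorm] using hz)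
    have h2 := ((qPL i).comp Φ).hasSum h1
    simp only [ContinuousLinearMap.comp_apply, qPL_apply, map_smul] at h2
    have h3 : ∀ n : ℕ, ((n + 1 : ℕ) : ℝ) • qP i (Φ ((qI i z) ^ n * a (n + 1)))
        = ((n : ℂ) + 1) * z ^ n * b (n + 1) := by
      intro n
      rw [hterm, Complex.real_smul]
      push_cast
      ring
    simpa only [h3] using h2
  have hM : ∀ z : ℂ, ‖z‖ < 1 → ‖z - z₀‖ ≤ 1 - ‖z₀‖ → ‖G z‖ ≤ sSup S := by
    intro z hz hzd
    have h1 : ‖G z‖ ≤ ‖f (qI i z)‖ := by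
      rw [hG]; simp only
      rw [hnb]
      exact hΦn _
    refine le_trans h1 (le_csSup hbdd ?_)
    refine ⟨qI i z, hmem z hz, ?_, rfl⟩
    rw [hxz, ← qI_sub, norm_qI hre hnorm, norm_qI hre hnorm]
    exact hzd
  have hkey := keyLemma hsumb hGsum hG'sum hz₀ hM
  have e1 : G z₀ = qP i (Φ (f x)) := by simp only [hG]; rw [← hxz]
  have e2 : G' z₀ = qP i (Φ (f' x)) := by simp only [hG']; rw [← hxz]
  rw [e1, e2, hnb, hnb, ← hnx] at hkey
  exact hkey


theorem stmt8 (i : ℍ) (hi : IsImaginaryUnit i) (f f' : ℍ → ℍ) (a : ℕ → ℍ)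
    (hf : SliceDeriv f f' a) (hcont : ContinuousOn f (Metric.closedBall 0 1)) :
    ∀ x ∈ sliceDisc i,
      (1 / 2 : ℝ) * (1 - ‖x‖) * ‖f' x - i * f' x * i‖ + ‖f x - i * f x * i‖ ≤
        2 * sSup {r : ℝ | ∃ y ∈ sliceDisc i, ‖y - x‖ ≤ 1 - ‖x‖ ∧ r = ‖f y‖} ∧
      (1 / 2 : ℝ) * (1 - ‖x‖) * ‖f' x + i * f' x * i‖ + ‖f x + i * f x * i‖ ≤
        2 * sSup {r : ℝ | ∃ y ∈ sliceDisc i, ‖y - x‖ ≤ 1 - ‖x‖ ∧ r = ‖f y‖} := by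
  intro x hx
  obtain ⟨hre, hnorm⟩ := hi
  have hii := hii_of hre hnorm
  obtain ⟨j, hjn, hjanti⟩ := exists_j hre hnorm
  have hj0 : j ≠ 0 := by
    intro h; rw [h, norm_zero] at hjn; norm_num at hjn
  constructor
  · have h := main_component hre hnorm hf hcont (comp1L i)
      (comp1L_comm hii) comp1L_equivar (norm_comp1L_le hnorm) hx
    rw [norm_comp1L, norm_comp1L] at h
    nlinarith [h]
  · have h := main_component hre hnorm hf hcont (comp2L i j)
      (comp2L_comm hii hj0 hjanti) (comp2L_equivar j) (norm_comp2L_le hnorm hjn) hx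
    rw [norm_comp2L hjn, norm_comp2L hjn] at h
    nlinarith [h]
end
end
end

section
/- Let ω₁, ω₂ be regular majorants, let i, j be orthogonal imaginary units, and let f be a slice regular function on D⁴ whose ℂ(i)-components f₁, f₂ on D_i satisfy ‖f_k(x) − f_k(y)‖ ≤ C_k·ω_k(‖x − y‖) for all x, y ∈ D_i, k = 1, 2. Then there exists C > 0 such that for all x ∈ D_i, ‖f′(x)‖ ≤ C·√(ω₁(1 − ‖x‖)² + ω₂(1 − ‖x‖)²)/(1 − ‖x‖). -/
noncomputable section

namespace Stmt10Aux


lemma imu_sq {i : ℍ} (h0 : i.re = 0) (h1 : ‖i‖ = 1) : i * i = -1 := by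
  have hs : star i = -i := QuaternionAlgebra.star_eq_neg.2 h0
  have h : i * star i = ((Quaternion.normSq i : ℝ) : ℍ) := Quaternion.self_mul_star i
  have hn : Quaternion.normSq i = 1 := by rw [Quaternion.normSq_eq_norm_mul_self, h1]; ring
  rw [hs, hn, mul_neg] at h
  have := congrArg Neg.neg h
  simpa using this

def phi (i : ℍ) (z : ℂ) : ℍ := (z.re : ℍ) + z.im • i

lemma phi_add (i : ℍ) (z w : ℂ) : phi i (z + w) = phi i z + phi i w := by
  simp only [phi, Complex.add_re, Complex.add_im, add_smul]
  push_cast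
  abel

lemma phi_sub (i : ℍ) (z w : ℂ) : phi i (z - w) = phi i z - phi i w := by
  simp only [phi, Complex.sub_re, Complex.sub_im, sub_smul]
  push_cast
  abel

lemma normSq_phi {i : ℍ} (h0 : i.re = 0) (h1 : ‖i‖ = 1) (z : ℂ) :
    Quaternion.normSq (phi i z) = z.re ^ 2 + z.im ^ 2 := by
  have hni : i.re ^ 2 + i.imI ^ 2 + i.imJ ^ 2 + i.imK ^ 2 = 1 := by
    rw [← Quaternion.normSq_def', Quaternion.normSq_eq_norm_mul_self, h1]; ring
  rw [h0] at hni
  simp only [phi, Quaternion.normSq_def', Quaternion.re_add, Quaternion.imI_add,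
    Quaternion.imJ_add, Quaternion.imK_add, Quaternion.re_coe, Quaternion.imI_coe,
    Quaternion.imJ_coe, Quaternion.imK_coe, Quaternion.re_smul, Quaternion.imI_smul,
    Quaternion.imJ_smul, Quaternion.imK_smul, h0, smul_eq_mul, mul_zero, add_zero, zero_add]
  nlinarith [hni]

lemma phi_norm {i : ℍ} (h0 : i.re = 0) (h1 : ‖i‖ = 1) (z : ℂ) : ‖phi i z‖ = ‖z‖ := by
  have h2 : ‖phi i z‖ * ‖phi i z‖ = ‖z‖ * ‖z‖ := by
    rw [← Quaternion.normSq_eq_norm_mul_self, normSq_phi h0 h1]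
    rw [← pow_two, Complex.sq_norm, Complex.normSq_apply]
    ring
  nlinarith [norm_nonneg (phi i z), norm_nonneg z]

lemma phi_mul {i : ℍ} (h0 : i.re = 0) (h1 : ‖i‖ = 1) (z w : ℂ) :
    phi i (z * w) = phi i z * phi i w := by
  have hni : i.imI ^ 2 + i.imJ ^ 2 + i.imK ^ 2 = 1 := by
    have := Quaternion.normSq_def' i
    rw [h0, Quaternion.normSq_eq_norm_mul_self, h1] at this
    nlinarith [this]
  ext
  all_goals
    simp only [phi, Quaternion.re_mul, Quaternion.imI_mul, Quaternion.imJ_mul,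
      Quaternion.imK_mul, Quaternion.re_add, Quaternion.imI_add, Quaternion.imJ_add,
      Quaternion.imK_add, Quaternion.re_coe, Quaternion.imI_coe, Quaternion.imJ_coe,
      Quaternion.imK_coe, Quaternion.re_smul, Quaternion.imI_smul, Quaternion.imJ_smul,
      Quaternion.imK_smul, h0, smul_eq_mul, Complex.mul_re, Complex.mul_im, mul_zero,
      add_zero, zero_add, zero_mul]
  all_goals first
    | ring1
    | linear_combination (z.im * w.im) * hni

lemma phi_pow {i : ℍ} (h0 : i.re = 0) (h1 : ‖i‖ = 1) (z : ℂ) (n : ℕ) :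
    phi i (z ^ n) = phi i z ^ n := by
  induction n with
  | zero => simp [phi]
  | succ n ih => rw [pow_succ, pow_succ, phi_mul h0 h1, ih]

lemma phi_smul (i : ℍ) (r : ℝ) (z : ℂ) : phi i ((r : ℂ) * z) = r • phi i z := by
  simp only [phi, Complex.mul_re, Complex.mul_im, Complex.ofReal_re, Complex.ofReal_im,
    zero_mul, mul_zero, sub_zero, zero_add, add_zero]
  rw [smul_add, ← mul_smul, Quaternion.coe_mul, Quaternion.coe_mul_eq_smul]

/-- If `w` commutes with an imaginary unit `i`, then `w ∈ ℂ(i)`. -/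
lemma mem_slice_of_commute {i : ℍ} (h0 : i.re = 0) (h1 : ‖i‖ = 1) {w : ℍ}
    (hc : i * w = w * i) : ∃ z : ℂ, w = phi i z := by
  have hni : i.imI ^ 2 + i.imJ ^ 2 + i.imK ^ 2 = 1 := by
    have := Quaternion.normSq_def' i
    rw [h0, Quaternion.normSq_eq_norm_mul_self, h1] at this
    nlinarith [this]
  set p := i.imI; set q := i.imJ; set r := i.imK
  set b := w.imI; set c := w.imJ; set d := w.imK
  have e1 : q * d = r * c := by
    have := congrArg QuaternionAlgebra.imI hc
    simp only [Quaternion.imI_mul, h0, zero_mul, mul_zero, zero_add, add_zero] at this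
    linarith [this]
  have e2 : r * b = p * d := by
    have := congrArg QuaternionAlgebra.imJ hc
    simp only [Quaternion.imJ_mul, h0, zero_mul, mul_zero, zero_add, add_zero] at this
    linarith [this]
  have e3 : p * c = q * b := by
    have := congrArg QuaternionAlgebra.imK hc
    simp only [Quaternion.imK_mul, h0, zero_mul, mul_zero, zero_add, add_zero] at this
    linarith [this]
  refine ⟨⟨w.re, p * b + q * c + r * d⟩, ?_⟩
  ext
  · simp [phi, h0]
  · simp only [phi, Quaternion.imI_add, Quaternion.imI_coe, Quaternion.imI_smul, smul_eq_mul,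
      zero_add]
    show b = (p * b + q * c + r * d) * p
    linear_combination (-b) * hni + (-q) * e3 + r * e2
  · simp only [phi, Quaternion.imJ_add, Quaternion.imJ_coe, Quaternion.imJ_smul, smul_eq_mul,
      zero_add]
    show c = (p * b + q * c + r * d) * q
    linear_combination (-c) * hni + p * e3 + (-r) * e1
  · simp only [phi, Quaternion.imK_add, Quaternion.imK_coe, Quaternion.imK_smul, smul_eq_mul,
      zero_add]
    show d = (p * b + q * c + r * d) * r
    linear_combination (-d) * hni + (-p) * e2 + q * e1

lemma anticomm {i j : ℍ} (hi0 : i.re = 0) (hj0 : j.re = 0)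
    (ho : (i * star j).re = 0) : i * j = -(j * i) := by
  have hs : star j = -j := QuaternionAlgebra.star_eq_neg.2 hj0
  rw [hs] at ho
  have ho' : (i * j).re = 0 := by
    have := ho
    simp only [Quaternion.re_mul, Quaternion.re_neg, Quaternion.imI_neg, Quaternion.imJ_neg,
      Quaternion.imK_neg] at this
    simp only [Quaternion.re_mul]
    linarith [this]
  ext
  · simp only [Quaternion.re_neg]
    simp only [Quaternion.re_mul, hi0, hj0, zero_mul, mul_zero, zero_sub] at ho' ⊢
    linarith [ho']
  · simp only [Quaternion.imI_neg, Quaternion.imI_mul, hi0, hj0, zero_mul, mul_zero,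
      zero_add, add_zero]
    ring
  · simp only [Quaternion.imJ_neg, Quaternion.imJ_mul, hi0, hj0, zero_mul, mul_zero,
      zero_add, add_zero]
    ring
  · simp only [Quaternion.imK_neg, Quaternion.imK_mul, hi0, hj0, zero_mul, mul_zero,
      zero_add, add_zero]
    ring

section
variable {i j : ℍ} (hi0 : i.re = 0) (hi1 : ‖i‖ = 1) (hj0 : j.re = 0) (hj1 : ‖j‖ = 1)
  (ho : (i * star j).re = 0)

include hi0 hi1 in
lemma iui (q : ℍ) : i * ((2⁻¹:ℝ) • (q - i * q * i)) * i = -((2⁻¹:ℝ) • (q - i * q * i)) := by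
  have hii := imu_sq hi0 hi1
  rw [mul_smul_comm, smul_mul_assoc, ← smul_neg]
  congr 1
  have h : i * (q - i * q * i) * i = i * q * i - i * i * q * (i * i) := by noncomm_ring
  rw [h, hii]
  noncomm_ring

include hi0 hi1 in
lemma iwi (q : ℍ) : i * ((2⁻¹:ℝ) • (q + i * q * i)) * i = (2⁻¹:ℝ) • (q + i * q * i) := by
  have hii := imu_sq hi0 hi1
  rw [mul_smul_comm, smul_mul_assoc]
  congr 1
  have h : i * (q + i * q * i) * i = i * q * i + i * i * q * (i * i) := by noncomm_ring
  rw [h, hii]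
  noncomm_ring

include hi0 hi1 in
lemma commute_of_iXi {X : ℍ} (h : i * X * i = -X) : i * X = X * i := by
  have hii := imu_sq hi0 hi1
  have h2 := congrArg (· * i) h
  calc i * X = -(i * X * (i * i)) := by rw [hii]; noncomm_ring
  _ = -(-X * i) := by rw [show i * X * (i * i) = i * X * i * i by noncomm_ring, h2]
  _ = X * i := by noncomm_ring

include hj0 hj1 in
lemma jinv : j⁻¹ = -j := by
  have hjj := imu_sq hj0 hj1
  have h : j * (-j) = 1 := by rw [mul_neg, hjj]; simp
  exact inv_eq_of_mul_eq_one_right h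

include hi0 hi1 hj0 hj1 ho in
lemma decompose (q : ℍ) :
    ∃ z w : ℂ, q = phi i z + phi i w * j ∧
      phi i z = (2⁻¹:ℝ) • (q - i * q * i) ∧
      phi i w = ((2⁻¹:ℝ) • (q + i * q * i)) * j⁻¹ := by
  have hac := anticomm hi0 hj0 ho
  have hjj := imu_sq hj0 hj1
  set u := (2⁻¹:ℝ) • (q - i * q * i) with hu
  set w0 := (2⁻¹:ℝ) • (q + i * q * i) with hw0
  have hvu : i * u = u * i := commute_of_iXi hi0 hi1 (iui hi0 hi1 q)
  have hiw0 : i * w0 * i = w0 := iwi hi0 hi1 q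
  set v := w0 * j⁻¹ with hv
  have hvj : v = -(w0 * j) := by rw [hv, jinv hj0 hj1]; noncomm_ring
  have hivi : i * v * i = -v := by
    rw [hvj]
    have h1 : i * -(w0 * j) * i = -(i * w0 * (j * i)) := by noncomm_ring
    have h2 : j * i = -(i * j) := by rw [hac, neg_neg]
    rw [h1, h2]
    have h3 : -(i * w0 * -(i * j)) = i * w0 * i * j := by noncomm_ring
    rw [h3, hiw0, neg_neg]
  have hcv : i * v = v * i := commute_of_iXi hi0 hi1 hivi
  obtain ⟨z, hz⟩ := mem_slice_of_commute hi0 hi1 hvu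
  obtain ⟨w, hw⟩ := mem_slice_of_commute hi0 hi1 hcv
  refine ⟨z, w, ?_, hz.symm, hw.symm⟩
  rw [← hz, ← hw]
  have hvjj : v * j = w0 := by
    rw [hvj]
    have h4 : -(w0 * j) * j = -(w0 * (j * j)) := by noncomm_ring
    rw [h4, hjj]
    noncomm_ring
  rw [hvjj, hu, hw0]
  module

end

lemma phi_comm (i : ℍ) (w : ℂ) : i * phi i w = phi i w * i := by
  simp only [phi, mul_add, add_mul, mul_smul_comm, smul_mul_assoc]
  congr 1
  exact (Quaternion.coe_commutes w.re i).symm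

lemma iphii {i : ℍ} (hi0 : i.re = 0) (hi1 : ‖i‖ = 1) (w : ℂ) :
    i * phi i w * i = -(phi i w) := by
  rw [phi_comm, mul_assoc, imu_sq hi0 hi1, mul_neg, mul_one]

lemma iji {i j : ℍ} (hi0 : i.re = 0) (hi1 : ‖i‖ = 1) (hj0 : j.re = 0)
    (ho : (i * star j).re = 0) : i * (j * i) = j := by
  have hac := anticomm hi0 hj0 ho
  rw [show i * (j * i) = (i * j) * i by noncomm_ring, hac]
  rw [show -(j * i) * i = -(j * (i * i)) by noncomm_ring, imu_sq hi0 hi1]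
  rw [mul_neg, mul_one, neg_neg]

lemma iphiji {i j : ℍ} (hi0 : i.re = 0) (hi1 : ‖i‖ = 1) (hj0 : j.re = 0)
    (ho : (i * star j).re = 0) (w : ℂ) : i * (phi i w * j) * i = phi i w * j := by
  have h1 : i * (phi i w * j) * i = (i * phi i w) * (j * i) := by noncomm_ring
  rw [h1, phi_comm]
  calc (phi i w * i) * (j * i) = phi i w * (i * (j * i)) := by noncomm_ring
  _ = phi i w * j := by rw [iji hi0 hi1 hj0 ho]

lemma Pcomp {i j : ℍ} (hi0 : i.re = 0) (hi1 : ‖i‖ = 1) (hj0 : j.re = 0)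
    (ho : (i * star j).re = 0) (U V : ℂ) :
    (2⁻¹:ℝ) • ((phi i U + phi i V * j) - i * (phi i U + phi i V * j) * i) = phi i U := by
  have h1 : i * (phi i U + phi i V * j) * i = -(phi i U) + phi i V * j := by
    rw [mul_add, add_mul, iphii hi0 hi1, iphiji hi0 hi1 hj0 ho]
  rw [h1]
  module

lemma Qcomp {i j : ℍ} (hi0 : i.re = 0) (hi1 : ‖i‖ = 1) (hj0 : j.re = 0)
    (ho : (i * star j).re = 0) (hjne : j ≠ 0) (U V : ℂ) :
    ((2⁻¹:ℝ) • ((phi i U + phi i V * j) + i * (phi i U + phi i V * j) * i)) * j⁻¹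
      = phi i V := by
  have h1 : i * (phi i U + phi i V * j) * i = -(phi i U) + phi i V * j := by
    rw [mul_add, add_mul, iphii hi0 hi1, iphiji hi0 hi1 hj0 ho]
  rw [h1]
  have h2 : (2⁻¹:ℝ) • ((phi i U + phi i V * j) + (-(phi i U) + phi i V * j))
      = phi i V * j := by module
  rw [h2, mul_assoc, mul_inv_cancel₀ hjne, mul_one]


lemma hasSum_phi {i : ℍ} {g : ℕ → ℂ} {s : ℂ} (h : HasSum g s) :
    HasSum (fun n => phi i (g n)) (phi i s) := by
  have key : ∀ x : ℝ, x • (1:ℍ) = (x:ℍ) := fun x => by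
    rw [← Quaternion.coe_one, Quaternion.smul_coe, mul_one]
  have hre : HasSum (fun n => ((g n).re : ℝ) • (1:ℍ)) (s.re • (1:ℍ)) :=
    (Complex.hasSum_re h).smul_const 1
  have him : HasSum (fun n => (g n).im • i) (s.im • i) :=
    (Complex.hasSum_im h).smul_const i
  have h2 := hre.add him
  simp only [key] at h2
  exact h2

lemma summable_aux {A : ℕ → ℝ} (hA : ∀ r : ℝ, 0 ≤ r → r < 1 → Summable (fun n => A n * r ^ n))
    (hA0 : ∀ n, 0 ≤ A n) {r : ℝ} (h0 : 0 ≤ r) (h1 : r < 1) :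
    Summable (fun n : ℕ => ((n : ℝ) + 1) * r ^ n * A (n + 1)) := by
  obtain ⟨r', hrr', h1'⟩ : ∃ r', r < r' ∧ r' < 1 := ⟨(1 + r) / 2, by linarith, by linarith⟩
  have h0' : 0 < r' := lt_of_le_of_lt h0 hrr'
  obtain ⟨M, hM⟩ := ((hA r' h0'.le h1').tendsto_atTop_zero.bddAbove_range).imp
    (fun M hM => fun n => hM (Set.mem_range_self n))
  have hM0 : 0 ≤ M := le_trans (by simpa using hA0 0) (hM 0)
  have hq0 : 0 ≤ r / r' := div_nonneg h0 h0'.le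
  have hq1 : r / r' < 1 := (div_lt_one h0').mpr hrr'
  have hsum : Summable (fun n : ℕ => (M / r') * (((n : ℝ) + 1) * (r / r') ^ n)) := by
    apply Summable.mul_left
    have h1s : Summable (fun n : ℕ => (n : ℝ) * (r / r') ^ n) := by
      simpa using summable_pow_mul_geometric_of_norm_lt_one 1 (r := r / r')
        (by rw [Real.norm_eq_abs, abs_of_nonneg hq0]; exact hq1)
    have h2s : Summable (fun n : ℕ => (r / r') ^ n) := summable_geometric_of_lt_one hq0 hq1
    simpa [add_mul] using h1s.add h2s
  apply Summable.of_nonneg_of_le (fun n => mul_nonneg (by positivity) (hA0 (n+1))) (fun n => ?_) hsum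
  have hAn : A (n + 1) ≤ M / r' ^ (n + 1) := by
    rw [le_div_iff₀ (by positivity)]
    exact hM (n + 1)
  calc ((n : ℝ) + 1) * r ^ n * A (n + 1) ≤ ((n : ℝ) + 1) * r ^ n * (M / r' ^ (n + 1)) :=
        mul_le_mul_of_nonneg_left hAn (by positivity)
  _ = M / r' * (((n : ℝ) + 1) * (r / r') ^ n) := by
        rw [div_pow, pow_succ]
        have : r' ^ n ≠ 0 := by positivity
        field_simp

lemma hasDerivAt_series {β : ℕ → ℂ} {A : ℕ → ℝ}
    (hA : ∀ r : ℝ, 0 ≤ r → r < 1 → Summable (fun n => A n * r ^ n))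
    (hA0 : ∀ n, 0 ≤ A n) (hβ : ∀ n, ‖β n‖ ≤ A n) {z : ℂ} (hz : ‖z‖ < 1) :
    HasDerivAt (fun y : ℂ => ∑' n, y ^ n * β n)
      (∑' n : ℕ, (((n : ℕ) + 1 : ℕ) : ℂ) * z ^ n * β (n + 1)) z := by
  set r := (1 + ‖z‖) / 2 with hr
  have hzr : ‖z‖ < r := by rw [hr]; linarith
  have hr0 : 0 ≤ r := le_trans (norm_nonneg z) hzr.le
  have hr1 : r < 1 := by rw [hr]; linarith
  set u : ℕ → ℝ := fun n => (n : ℝ) * r ^ (n - 1) * A n with hu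
  have husum : Summable u := by
    rw [← summable_nat_add_iff 1]
    have := summable_aux hA hA0 hr0 hr1
    apply this.congr
    intro n
    rw [hu]
    push_cast
    simp
  have hball : z ∈ Metric.ball (0:ℂ) r := by simpa using hzr
  have hgderiv : ∀ (n : ℕ) (y : ℂ), y ∈ Metric.ball (0:ℂ) r →
      HasDerivAt (fun y : ℂ => y ^ n * β n) ((n : ℂ) * y ^ (n - 1) * β n) y :=
    fun n y _ => (hasDerivAt_pow n y).mul_const (β n)
  have hbound : ∀ (n : ℕ) (y : ℂ), y ∈ Metric.ball (0:ℂ) r →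
      ‖(n : ℂ) * y ^ (n - 1) * β n‖ ≤ u n := by
    intro n y hy
    rw [Metric.mem_ball, dist_zero_right] at hy
    rw [norm_mul, norm_mul, Complex.norm_natCast, norm_pow]
    apply mul_le_mul (mul_le_mul le_rfl (pow_le_pow_left₀ (norm_nonneg y) hy.le _)
      (by positivity) (by positivity)) (hβ n) (norm_nonneg _)
      (by positivity)
  have hsum0 : Summable (fun n : ℕ => (0:ℂ) ^ n * β n) := by
    apply summable_of_ne_finset_zero (s := {0})
    intro n hn
    simp only [Finset.mem_singleton] at hn
    rw [zero_pow hn, zero_mul]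
  have h0r : (0:ℂ) ∈ Metric.ball (0:ℂ) r := by
    simpa using lt_of_le_of_lt (norm_nonneg z) hzr
  have hder := hasDerivAt_tsum_of_isPreconnected husum Metric.isOpen_ball
    (convex_ball (0:ℂ) r).isPreconnected hgderiv hbound h0r hsum0 hball
  refine hder.congr_deriv ?_
  have hs : Summable (fun n : ℕ => (n : ℂ) * z ^ (n - 1) * β n) :=
    Summable.of_norm_bounded husum (fun n => hbound n z hball)
  rw [Summable.tsum_eq_zero_add hs]
  simp only [Nat.cast_zero, zero_mul, zero_add]
  apply tsum_congr
  intro n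
  push_cast
  simp

lemma schwarz_bound {g : ℂ → ℂ} {g' : ℂ → ℂ} {K : ℝ} {ω : ℝ → ℝ}
    (hK : 0 ≤ K)
    (hω_mono : MonotoneOn ω (Set.Icc 0 2)) (hω_nonneg : ∀ t ∈ Set.Icc (0:ℝ) 2, 0 ≤ ω t)
    (hdiff : ∀ y : ℂ, ‖y‖ < 1 → HasDerivAt g (g' y) y)
    (hlip : ∀ y w : ℂ, ‖y‖ < 1 → ‖w‖ < 1 → ‖g y - g w‖ ≤ K * ω ‖y - w‖)
    {z : ℂ} (hz : ‖z‖ < 1) :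
    ‖g' z‖ ≤ K * ω (1 - ‖z‖) / (1 - ‖z‖) := by
  set R : ℝ := 1 - ‖z‖ with hR
  have hR0 : 0 < R := by rw [hR]; linarith
  have hR2 : R ≤ 2 := by have := norm_nonneg z; rw [hR]; linarith
  have hsub : Metric.ball z R ⊆ {y : ℂ | ‖y‖ < 1} := by
    intro y hy
    rw [Metric.mem_ball, dist_eq_norm] at hy
    have h := norm_sub_norm_le y z
    simp only [Set.mem_setOf_eq]
    linarith [h, hy]
  have hd : DifferentiableOn ℂ g (Metric.ball z R) := fun y hy =>
    ((hdiff y (hsub hy)).differentiableAt).differentiableWithinAt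
  have hderiv : deriv g z = g' z := (hdiff z hz).deriv
  have key : ∀ ε : ℝ, 0 < ε → ‖g' z‖ ≤ (K * ω R + ε) / R := by
    intro ε hε
    rw [← hderiv]
    apply Complex.norm_deriv_le_div_of_mapsTo_ball hd ?_ hR0
    intro y hy
    rw [Metric.mem_ball, dist_eq_norm] at hy
    rw [Metric.mem_closedBall, dist_eq_norm]
    have h1 : ‖g y - g z‖ ≤ K * ω ‖y - z‖ := hlip y z (hsub (by rw [Metric.mem_ball, dist_eq_norm]; exact hy)) hz
    have h2 : ω ‖y - z‖ ≤ ω R := by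
      apply hω_mono ⟨norm_nonneg _, by linarith⟩ ⟨by linarith, hR2⟩ hy.le
    have h3 : K * ω ‖y - z‖ ≤ K * ω R := mul_le_mul_of_nonneg_left h2 hK
    linarith [h1, h3]
  have hfinal : ‖g' z‖ ≤ K * ω R / R := by
    apply le_of_forall_pos_le_add
    intro ε hε
    have := key (ε * R) (by positivity)
    rw [add_div, mul_div_cancel_right₀ _ (ne_of_gt hR0)] at this
    linarith [this]
  exact hfinal
end Stmt10Aux

theorem stmt10 (ω₁ ω₂ : ℝ → ℝ) (hω₁ : IsRegularMajorant ω₁) (hω₂ : IsRegularMajorant ω₂)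
    (i j : ℍ) (hij : OrthogonalUnits i j)
    (f f' : ℍ → ℍ) (a : ℕ → ℍ) (hf : SliceDeriv f f' a)
    (C₁ C₂ : ℝ)
    (h1 : ∀ x ∈ sliceDisc i, ∀ y ∈ sliceDisc i,
      ‖comp1 i f x - comp1 i f y‖ ≤ C₁ * ω₁ ‖x - y‖)
    (h2 : ∀ x ∈ sliceDisc i, ∀ y ∈ sliceDisc i,
      ‖comp2 i j f x - comp2 i j f y‖ ≤ C₂ * ω₂ ‖x - y‖) :
    ∃ C > 0, ∀ x ∈ sliceDisc i,
      ‖f' x‖ ≤ C * Real.sqrt (ω₁ (1 - ‖x‖) ^ 2 + ω₂ (1 - ‖x‖) ^ 2) / (1 - ‖x‖) := by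
  obtain ⟨⟨hi0, hi1⟩, ⟨hj0, hj1⟩, ho⟩ := hij
  obtain ⟨⟨hconv, hsum⟩, hder⟩ := hf
  have hmaj₁ := hω₁.1
  have hmaj₂ := hω₂.1
  have hjne : j ≠ 0 := by
    intro h; rw [h] at hj1; simp at hj1
  choose β γ ha hb hc using fun n => Stmt10Aux.decompose hi0 hi1 hj0 hj1 ho (a n)
  have hA0 : ∀ n, (0:ℝ) ≤ ‖a n‖ := fun n => norm_nonneg _
  have hβ : ∀ n, ‖β n‖ ≤ ‖a n‖ := by
    intro n
    calc ‖β n‖ = ‖Stmt10Aux.phi i (β n)‖ := (Stmt10Aux.phi_norm hi0 hi1 _).symm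
    _ = ‖(2⁻¹:ℝ) • (a n - i * a n * i)‖ := by rw [hb n]
    _ ≤ 2⁻¹ * (‖a n‖ + ‖i * a n * i‖) := by
        rw [norm_smul]
        simp only [norm_inv, Real.norm_ofNat]
        exact mul_le_mul_of_nonneg_left (norm_sub_le _ _) (by norm_num)
    _ = ‖a n‖ := by rw [norm_mul, norm_mul, hi1]; ring
  have hγ : ∀ n, ‖γ n‖ ≤ ‖a n‖ := by
    intro n
    calc ‖γ n‖ = ‖Stmt10Aux.phi i (γ n)‖ := (Stmt10Aux.phi_norm hi0 hi1 _).symm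
    _ = ‖((2⁻¹:ℝ) • (a n + i * a n * i)) * j⁻¹‖ := by rw [hc n]
    _ = ‖(2⁻¹:ℝ) • (a n + i * a n * i)‖ := by
        rw [norm_mul, norm_inv, hj1]; norm_num
    _ ≤ 2⁻¹ * (‖a n‖ + ‖i * a n * i‖) := by
        rw [norm_smul]
        simp only [norm_inv, Real.norm_ofNat]
        exact mul_le_mul_of_nonneg_left (norm_add_le _ _) (by norm_num)
    _ = ‖a n‖ := by rw [norm_mul, norm_mul, hi1]; ring
  have hmem : ∀ z : ℂ, ‖z‖ < 1 → Stmt10Aux.phi i z ∈ sliceDisc i := fun z hz =>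
    ⟨⟨z.re, z.im, rfl⟩, by rw [Stmt10Aux.phi_norm hi0 hi1]; exact hz⟩
  have hball : ∀ z : ℂ, ‖z‖ < 1 → Stmt10Aux.phi i z ∈ unitBall := fun z hz => by
    show ‖Stmt10Aux.phi i z‖ < 1
    rw [Stmt10Aux.phi_norm hi0 hi1]; exact hz
  set g₁ : ℂ → ℂ := fun y => ∑' n, y ^ n * β n with hg₁def
  set g₂ : ℂ → ℂ := fun y => ∑' n, y ^ n * γ n with hg₂def
  set D₁ : ℂ → ℂ := fun y => ∑' n : ℕ, ((n + 1 : ℕ) : ℂ) * y ^ n * β (n + 1) with hD₁def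
  set D₂ : ℂ → ℂ := fun y => ∑' n : ℕ, ((n + 1 : ℕ) : ℂ) * y ^ n * γ (n + 1) with hD₂def
  have hsummand : ∀ (z : ℂ) (n m : ℕ), (Stmt10Aux.phi i z) ^ n * a m =
      Stmt10Aux.phi i (z ^ n * β m) + Stmt10Aux.phi i (z ^ n * γ m) * j := by
    intro z n m
    rw [ha m, ← Stmt10Aux.phi_pow hi0 hi1, mul_add, ← Stmt10Aux.phi_mul hi0 hi1,
      ← mul_assoc, ← Stmt10Aux.phi_mul hi0 hi1]
  have hsumβ : ∀ z : ℂ, ‖z‖ < 1 → Summable (fun n => z ^ n * β n) := by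
    intro z hz
    apply Summable.of_norm_bounded (hconv ‖z‖ (norm_nonneg z) hz)
    intro n
    rw [norm_mul, norm_pow, mul_comm]
    exact mul_le_mul_of_nonneg_right (hβ n) (by positivity)
  have hsumγ : ∀ z : ℂ, ‖z‖ < 1 → Summable (fun n => z ^ n * γ n) := by
    intro z hz
    apply Summable.of_norm_bounded (hconv ‖z‖ (norm_nonneg z) hz)
    intro n
    rw [norm_mul, norm_pow, mul_comm]
    exact mul_le_mul_of_nonneg_right (hγ n) (by positivity)
  have hcomp1 : ∀ z : ℂ, ‖z‖ < 1 → comp1 i f (Stmt10Aux.phi i z) = Stmt10Aux.phi i (g₁ z) := by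
    intro z hz
    have hF := hsum _ (hball z hz)
    have h1s := (hF.sub ((hF.mul_left i).mul_right i)).const_smul (2⁻¹:ℝ)
    have heq : (fun n => (2⁻¹:ℝ) • ((Stmt10Aux.phi i z ^ n * a n)
        - i * (Stmt10Aux.phi i z ^ n * a n) * i))
        = fun n => Stmt10Aux.phi i (z ^ n * β n) := funext fun n => by
      rw [hsummand z n n]; exact Stmt10Aux.Pcomp hi0 hi1 hj0 ho _ _
    rw [heq] at h1s
    have h2 : HasSum (fun n => Stmt10Aux.phi i (z ^ n * β n)) (Stmt10Aux.phi i (g₁ z)) :=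
      Stmt10Aux.hasSum_phi (hsumβ z hz).hasSum
    exact h1s.unique h2
  have hcomp2 : ∀ z : ℂ, ‖z‖ < 1 → comp2 i j f (Stmt10Aux.phi i z) = Stmt10Aux.phi i (g₂ z) := by
    intro z hz
    have hF := hsum _ (hball z hz)
    have h1s := ((hF.add ((hF.mul_left i).mul_right i)).const_smul (2⁻¹:ℝ)).mul_right j⁻¹
    have heq : (fun n => ((2⁻¹:ℝ) • ((Stmt10Aux.phi i z ^ n * a n)
        + i * (Stmt10Aux.phi i z ^ n * a n) * i)) * j⁻¹)
        = fun n => Stmt10Aux.phi i (z ^ n * γ n) := funext fun n => by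
      rw [hsummand z n n]; exact Stmt10Aux.Qcomp hi0 hi1 hj0 ho hjne _ _
    rw [heq] at h1s
    have h2 : HasSum (fun n => Stmt10Aux.phi i (z ^ n * γ n)) (Stmt10Aux.phi i (g₂ z)) :=
      Stmt10Aux.hasSum_phi (hsumγ z hz).hasSum
    exact h1s.unique h2
  -- summability of the derivative series
  have hsumD₁ : ∀ z : ℂ, ‖z‖ < 1 → Summable (fun n : ℕ => ((n + 1 : ℕ) : ℂ) * z ^ n * β (n + 1)) := by
    intro z hz
    apply Summable.of_norm_bounded (Stmt10Aux.summable_aux hconv hA0 (norm_nonneg z) hz)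
    intro n
    rw [norm_mul, norm_mul, norm_pow, Complex.norm_natCast]
    push_cast
    exact mul_le_mul_of_nonneg_left (hβ (n + 1)) (by positivity)
  have hsumD₂ : ∀ z : ℂ, ‖z‖ < 1 → Summable (fun n : ℕ => ((n + 1 : ℕ) : ℂ) * z ^ n * γ (n + 1)) := by
    intro z hz
    apply Summable.of_norm_bounded (Stmt10Aux.summable_aux hconv hA0 (norm_nonneg z) hz)
    intro n
    rw [norm_mul, norm_mul, norm_pow, Complex.norm_natCast]
    push_cast
    exact mul_le_mul_of_nonneg_left (hγ (n + 1)) (by positivity)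
  -- the slice derivative in terms of the component series
  have hf'eq : ∀ z : ℂ, ‖z‖ < 1 →
      f' (Stmt10Aux.phi i z) = Stmt10Aux.phi i (D₁ z) + Stmt10Aux.phi i (D₂ z) * j := by
    intro z hz
    have hD := hder _ (hball z hz)
    have heq : (fun n : ℕ => ((n + 1 : ℕ) : ℝ) • ((Stmt10Aux.phi i z) ^ n * a (n + 1)))
        = fun n : ℕ => Stmt10Aux.phi i (((n + 1 : ℕ) : ℂ) * z ^ n * β (n + 1))
          + Stmt10Aux.phi i (((n + 1 : ℕ) : ℂ) * z ^ n * γ (n + 1)) * j := funext fun n => by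
      rw [hsummand z n (n + 1), smul_add, ← smul_mul_assoc]
      congr 1
      · rw [← Stmt10Aux.phi_smul]
        congr 1
        push_cast
        ring
      · congr 1
        rw [← Stmt10Aux.phi_smul]
        congr 1
        push_cast
        ring
    rw [heq] at hD
    have h2 : HasSum (fun n : ℕ => Stmt10Aux.phi i (((n + 1 : ℕ) : ℂ) * z ^ n * β (n + 1))
        + Stmt10Aux.phi i (((n + 1 : ℕ) : ℂ) * z ^ n * γ (n + 1)) * j)
        (Stmt10Aux.phi i (D₁ z) + Stmt10Aux.phi i (D₂ z) * j) :=
      (Stmt10Aux.hasSum_phi (hsumD₁ z hz).hasSum).add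
        ((Stmt10Aux.hasSum_phi (hsumD₂ z hz).hasSum).mul_right j)
    exact hD.unique h2
  -- Lipschitz bounds for the component functions
  set K₁ : ℝ := max C₁ 1 with hK₁def
  set K₂ : ℝ := max C₂ 1 with hK₂def
  have hK₁0 : (0:ℝ) < K₁ := lt_of_lt_of_le one_pos (le_max_right _ _)
  have hK₂0 : (0:ℝ) < K₂ := lt_of_lt_of_le one_pos (le_max_right _ _)
  have hdist2 : ∀ y w : ℂ, ‖y‖ < 1 → ‖w‖ < 1 → ‖y - w‖ ∈ Set.Icc (0:ℝ) 2 := by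
    intro y w hy hw
    exact ⟨norm_nonneg _, by linarith [norm_sub_le y w]⟩
  have hlip₁ : ∀ y w : ℂ, ‖y‖ < 1 → ‖w‖ < 1 → ‖g₁ y - g₁ w‖ ≤ K₁ * ω₁ ‖y - w‖ := by
    intro y w hy hw
    have h := h1 _ (hmem y hy) _ (hmem w hw)
    rw [hcomp1 y hy, hcomp1 w hw, ← Stmt10Aux.phi_sub, Stmt10Aux.phi_norm hi0 hi1,
      ← Stmt10Aux.phi_sub, Stmt10Aux.phi_norm hi0 hi1] at h
    calc ‖g₁ y - g₁ w‖ ≤ C₁ * ω₁ ‖y - w‖ := h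
    _ ≤ K₁ * ω₁ ‖y - w‖ := mul_le_mul_of_nonneg_right (le_max_left _ _)
        (hmaj₁.nonneg _ (hdist2 y w hy hw))
  have hlip₂ : ∀ y w : ℂ, ‖y‖ < 1 → ‖w‖ < 1 → ‖g₂ y - g₂ w‖ ≤ K₂ * ω₂ ‖y - w‖ := by
    intro y w hy hw
    have h := h2 _ (hmem y hy) _ (hmem w hw)
    rw [hcomp2 y hy, hcomp2 w hw, ← Stmt10Aux.phi_sub, Stmt10Aux.phi_norm hi0 hi1,
      ← Stmt10Aux.phi_sub, Stmt10Aux.phi_norm hi0 hi1] at h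
    calc ‖g₂ y - g₂ w‖ ≤ C₂ * ω₂ ‖y - w‖ := h
    _ ≤ K₂ * ω₂ ‖y - w‖ := mul_le_mul_of_nonneg_right (le_max_left _ _)
        (hmaj₂.nonneg _ (hdist2 y w hy hw))
  -- derivative bounds via the Schwarz lemma
  have hd₁ : ∀ z : ℂ, ‖z‖ < 1 → HasDerivAt g₁ (D₁ z) z := fun z hz =>
    Stmt10Aux.hasDerivAt_series hconv hA0 hβ hz
  have hd₂ : ∀ z : ℂ, ‖z‖ < 1 → HasDerivAt g₂ (D₂ z) z := fun z hz =>
    Stmt10Aux.hasDerivAt_series hconv hA0 hγ hz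
  have hb₁ : ∀ z : ℂ, ‖z‖ < 1 → ‖D₁ z‖ ≤ K₁ * ω₁ (1 - ‖z‖) / (1 - ‖z‖) := fun z hz =>
    Stmt10Aux.schwarz_bound hK₁0.le hmaj₁.mono hmaj₁.nonneg hd₁ hlip₁ hz
  have hb₂ : ∀ z : ℂ, ‖z‖ < 1 → ‖D₂ z‖ ≤ K₂ * ω₂ (1 - ‖z‖) / (1 - ‖z‖) := fun z hz =>
    Stmt10Aux.schwarz_bound hK₂0.le hmaj₂.mono hmaj₂.nonneg hd₂ hlip₂ hz
  -- assemble
  refine ⟨K₁ + K₂, by positivity, ?_⟩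
  intro x hx
  obtain ⟨⟨xr, xi, hxz⟩, hxn⟩ := hx
  set z : ℂ := ⟨xr, xi⟩ with hzdef
  have hxphi : x = Stmt10Aux.phi i z := hxz
  have hnx : ‖x‖ = ‖z‖ := by rw [hxphi, Stmt10Aux.phi_norm hi0 hi1]
  have hzn : ‖z‖ < 1 := by rw [← hnx]; exact hxn
  set R : ℝ := 1 - ‖z‖ with hRdef
  have hR0 : 0 < R := by rw [hRdef]; linarith
  have hR2 : R ∈ Set.Icc (0:ℝ) 2 := ⟨hR0.le, by have := norm_nonneg z; rw [hRdef]; linarith⟩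
  have hω₁R : 0 ≤ ω₁ R := hmaj₁.nonneg _ hR2
  have hω₂R : 0 ≤ ω₂ R := hmaj₂.nonneg _ hR2
  have hfx : ‖f' x‖ ≤ ‖D₁ z‖ + ‖D₂ z‖ := by
    rw [hxphi, hf'eq z hzn]
    calc ‖Stmt10Aux.phi i (D₁ z) + Stmt10Aux.phi i (D₂ z) * j‖
        ≤ ‖Stmt10Aux.phi i (D₁ z)‖ + ‖Stmt10Aux.phi i (D₂ z) * j‖ := norm_add_le _ _
    _ = ‖D₁ z‖ + ‖D₂ z‖ := by
        rw [norm_mul, hj1, mul_one, Stmt10Aux.phi_norm hi0 hi1, Stmt10Aux.phi_norm hi0 hi1]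
  have hsq : Real.sqrt (ω₁ R ^ 2 + ω₂ R ^ 2) = Real.sqrt (ω₁ (1 - ‖x‖) ^ 2 + ω₂ (1 - ‖x‖) ^ 2) := by
    rw [hnx]
  have hs₁ : ω₁ R ≤ Real.sqrt (ω₁ R ^ 2 + ω₂ R ^ 2) := by
    rw [Real.le_sqrt hω₁R (by positivity)]
    nlinarith [sq_nonneg (ω₂ R)]
  have hs₂ : ω₂ R ≤ Real.sqrt (ω₁ R ^ 2 + ω₂ R ^ 2) := by
    rw [Real.le_sqrt hω₂R (by positivity)]
    nlinarith [sq_nonneg (ω₁ R)]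
  have hfinal : ‖f' x‖ ≤ (K₁ + K₂) * Real.sqrt (ω₁ R ^ 2 + ω₂ R ^ 2) / R := by
    calc ‖f' x‖ ≤ ‖D₁ z‖ + ‖D₂ z‖ := hfx
    _ ≤ K₁ * ω₁ R / R + K₂ * ω₂ R / R := add_le_add (hb₁ z hzn) (hb₂ z hzn)
    _ ≤ K₁ * Real.sqrt (ω₁ R ^ 2 + ω₂ R ^ 2) / R
        + K₂ * Real.sqrt (ω₁ R ^ 2 + ω₂ R ^ 2) / R := by
        gcongr
    _ = (K₁ + K₂) * Real.sqrt (ω₁ R ^ 2 + ω₂ R ^ 2) / R := by ring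
  rw [← hsq, show (1 : ℝ) - ‖x‖ = R by rw [hnx]]
  exact hfinal
end
end

section
/- Let i, j be imaginary units and let f : ℍ → ℍ be continuous on the closed unit ball of ℍ. Then for every x ∈ D_i: (1/(2π))·∫₀^{2π} ‖(1/2)·[(1 + j·i)·(x − e^{−it})⁻²·f(e^{−it}) + (1 − j·i)·(x − e^{it})⁻²·f(e^{it})]‖·(1 − ‖x‖²) dt ≤ 2·P_i[z ↦ ‖f(z)‖](x). (For slice regular f, the integrand equals ‖(x − e^{jt})^{−*2} * f(e^{jt})‖·(1 − ‖x‖²), so this is the bound (1/(2π))·∫₀^{2π} ‖(x − e^{jt})^{−*2} * f(e^{jt})‖·(1 − ‖x‖²) dt ≤ 2·P_i[‖f‖](x).) -/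
noncomputable section

lemma expI_norm (i : ℍ) (hi : IsImaginaryUnit i) (t : ℝ) : ‖expI i t‖ = 1 := by
  have hni : i.imI ^ 2 + i.imJ ^ 2 + i.imK ^ 2 = 1 := by
    have h := Quaternion.normSq_eq_norm_mul_self i
    rw [hi.2, Quaternion.normSq_def'] at h
    have : i.re = 0 := hi.1
    nlinarith [h]
  have hsq : Quaternion.normSq (expI i t) = 1 := by
    rw [Quaternion.normSq_def']
    simp only [expI, Quaternion.re_add, Quaternion.imI_add, Quaternion.imJ_add,
      Quaternion.imK_add, Quaternion.re_coe, Quaternion.imI_coe, Quaternion.imJ_coe,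
      Quaternion.imK_coe, Quaternion.re_smul, Quaternion.imI_smul, Quaternion.imJ_smul,
      Quaternion.imK_smul, smul_eq_mul, hi.1, mul_zero, add_zero, zero_add]
    have := Real.sin_sq_add_cos_sq t
    nlinarith [hni]
  have h2 := Quaternion.normSq_eq_norm_mul_self (expI i t)
  rw [hsq] at h2
  have := norm_nonneg (expI i t)
  nlinarith

lemma expI_periodic (i : ℍ) : Function.Periodic (expI i) (2 * Real.pi) := by
  intro t
  simp [expI, Real.cos_add_two_pi, Real.sin_add_two_pi]

lemma expI_continuous (i : ℍ) : Continuous (expI i) :=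
  (Quaternion.continuous_coe.comp Real.continuous_cos).add
    (Real.continuous_sin.smul continuous_const)

theorem stmt17 (i j : ℍ) (hi : IsImaginaryUnit i) (hj : IsImaginaryUnit j) (f : ℍ → ℍ)
    (hcont : ContinuousOn f (Metric.closedBall 0 1)) :
    ∀ x ∈ sliceDisc i,
      (1 / (2 * Real.pi)) * (∫ t in (0:ℝ)..(2 * Real.pi),
          ‖(2⁻¹ : ℝ) • ((1 + j * i) * ((x - expI i (-t))⁻¹ ^ 2) * f (expI i (-t)) +
              (1 - j * i) * ((x - expI i t)⁻¹ ^ 2) * f (expI i t))‖ * (1 - ‖x‖ ^ 2)) ≤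
        2 * poisson i (fun z => ‖f z‖) x := by
  intro x hx
  obtain ⟨-, hxn⟩ := hx
  have hc : (0:ℝ) ≤ 1 - ‖x‖ ^ 2 := by nlinarith [norm_nonneg x]
  have hne : ∀ t : ℝ, x - expI i t ≠ 0 := by
    intro t h
    have hxe : x = expI i t := sub_eq_zero.1 h
    rw [hxe, expI_norm i hi t] at hxn
    linarith
  have hdpos : ∀ t : ℝ, (0:ℝ) < ‖x - expI i t‖ ^ 2 := fun t =>
    pow_pos (norm_pos_iff.2 (hne t)) 2
  set g : ℝ → ℝ := fun t => ‖f (expI i t)‖ * (1 - ‖x‖ ^ 2) / ‖x - expI i t‖ ^ 2 with hg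
  have hmem : ∀ t : ℝ, expI i t ∈ Metric.closedBall (0:ℍ) 1 := fun t => by
    simp [Metric.mem_closedBall, expI_norm i hi t]
  have hfc : Continuous fun t : ℝ => f (expI i t) := by
    rw [← continuousOn_univ]
    exact hcont.comp (expI_continuous i).continuousOn (fun t _ => hmem t)
  have hinv : Continuous fun t : ℝ => (x - expI i t)⁻¹ :=
    (continuous_const.sub (expI_continuous i)).inv₀ hne
  have hgc : Continuous g := by
    apply Continuous.div (hfc.norm.mul continuous_const)
      ((continuous_const.sub (expI_continuous i)).norm.pow 2)
    exact fun t => (hdpos t).ne'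
  have hF : Continuous fun t : ℝ =>
      ‖(2⁻¹ : ℝ) • ((1 + j * i) * ((x - expI i (-t))⁻¹ ^ 2) * f (expI i (-t)) +
        (1 - j * i) * ((x - expI i t)⁻¹ ^ 2) * f (expI i t))‖ * (1 - ‖x‖ ^ 2) := by
    have h1 : Continuous fun t : ℝ => (x - expI i (-t))⁻¹ := hinv.comp continuous_neg
    have h2 : Continuous fun t : ℝ => f (expI i (-t)) := hfc.comp continuous_neg
    exact ((((continuous_const.mul (h1.pow 2)).mul h2).add
      ((continuous_const.mul (hinv.pow 2)).mul hfc)).const_smul (2⁻¹:ℝ)).norm.mul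
      continuous_const
  have key : ∀ t : ℝ,
      ‖(2⁻¹ : ℝ) • ((1 + j * i) * ((x - expI i (-t))⁻¹ ^ 2) * f (expI i (-t)) +
        (1 - j * i) * ((x - expI i t)⁻¹ ^ 2) * f (expI i t))‖ * (1 - ‖x‖ ^ 2) ≤
      g (-t) + g t := by
    intro t
    have hji : ‖j * i‖ = 1 := by rw [norm_mul, hi.2, hj.2]; ring
    have hb1 : ‖(1:ℍ) + j * i‖ ≤ 2 := by
      calc ‖(1:ℍ) + j * i‖ ≤ ‖(1:ℍ)‖ + ‖j * i‖ := norm_add_le _ _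
        _ = 2 := by rw [hji, norm_one]; norm_num
    have hb2 : ‖(1:ℍ) - j * i‖ ≤ 2 := by
      calc ‖(1:ℍ) - j * i‖ ≤ ‖(1:ℍ)‖ + ‖j * i‖ := norm_sub_le _ _
        _ = 2 := by rw [hji, norm_one]; norm_num
    set P := (1 + j * i) * ((x - expI i (-t))⁻¹ ^ 2) * f (expI i (-t)) with hP
    set Q := (1 - j * i) * ((x - expI i t)⁻¹ ^ 2) * f (expI i t) with hQ
    have hnP : ‖P‖ ≤ 2 * (‖f (expI i (-t))‖ * ‖x - expI i (-t)‖⁻¹ ^ 2) := by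
      rw [hP, norm_mul, norm_mul, norm_pow, norm_inv]
      have h0 : (0:ℝ) ≤ ‖x - expI i (-t)‖⁻¹ ^ 2 * ‖f (expI i (-t))‖ := by positivity
      calc ‖(1:ℍ) + j * i‖ * ‖x - expI i (-t)‖⁻¹ ^ 2 * ‖f (expI i (-t))‖
          ≤ 2 * ‖x - expI i (-t)‖⁻¹ ^ 2 * ‖f (expI i (-t))‖ := by
            have := mul_le_mul_of_nonneg_right hb1 h0
            linarith [mul_le_mul_of_nonneg_right hb1 h0, mul_assoc (‖(1:ℍ) + j*i‖) (‖x - expI i (-t)‖⁻¹ ^ 2) (‖f (expI i (-t))‖)]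
        _ = 2 * (‖f (expI i (-t))‖ * ‖x - expI i (-t)‖⁻¹ ^ 2) := by ring
    have hnQ : ‖Q‖ ≤ 2 * (‖f (expI i t)‖ * ‖x - expI i t‖⁻¹ ^ 2) := by
      rw [hQ, norm_mul, norm_mul, norm_pow, norm_inv]
      have h0 : (0:ℝ) ≤ ‖x - expI i t‖⁻¹ ^ 2 * ‖f (expI i t)‖ := by positivity
      calc ‖(1:ℍ) - j * i‖ * ‖x - expI i t‖⁻¹ ^ 2 * ‖f (expI i t)‖
          ≤ 2 * ‖x - expI i t‖⁻¹ ^ 2 * ‖f (expI i t)‖ := by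
            linarith [mul_le_mul_of_nonneg_right hb2 h0, mul_assoc (‖(1:ℍ) - j*i‖) (‖x - expI i t‖⁻¹ ^ 2) (‖f (expI i t)‖)]
        _ = 2 * (‖f (expI i t)‖ * ‖x - expI i t‖⁻¹ ^ 2) := by ring
    have hsm : ‖(2⁻¹ : ℝ) • (P + Q)‖ = 2⁻¹ * ‖P + Q‖ := by
      rw [norm_smul]; norm_num
    calc ‖(2⁻¹ : ℝ) • (P + Q)‖ * (1 - ‖x‖ ^ 2)
        ≤ 2⁻¹ * (‖P‖ + ‖Q‖) * (1 - ‖x‖ ^ 2) := by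
          rw [hsm]
          have := norm_add_le P Q
          nlinarith [norm_add_le P Q]
      _ ≤ 2⁻¹ * (2 * (‖f (expI i (-t))‖ * ‖x - expI i (-t)‖⁻¹ ^ 2) +
            2 * (‖f (expI i t)‖ * ‖x - expI i t‖⁻¹ ^ 2)) * (1 - ‖x‖ ^ 2) := by
          nlinarith [hnP, hnQ]
      _ = g (-t) + g t := by
          rw [hg]
          field_simp
  have hint1 : IntervalIntegrable (fun t : ℝ =>
      ‖(2⁻¹ : ℝ) • ((1 + j * i) * ((x - expI i (-t))⁻¹ ^ 2) * f (expI i (-t)) +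
        (1 - j * i) * ((x - expI i t)⁻¹ ^ 2) * f (expI i t))‖ * (1 - ‖x‖ ^ 2))
      MeasureTheory.volume 0 (2 * Real.pi) := hF.intervalIntegrable _ _
  have hint2 : IntervalIntegrable (fun t : ℝ => g (-t) + g t)
      MeasureTheory.volume 0 (2 * Real.pi) :=
    ((hgc.comp continuous_neg).add hgc).intervalIntegrable _ _
  have hmono := intervalIntegral.integral_mono_on (by positivity : (0:ℝ) ≤ 2 * Real.pi)
    hint1 hint2 (fun t _ => key t)
  have hgper : Function.Periodic g (2 * Real.pi) := by
    intro t
    simp only [hg]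
    rw [expI_periodic i t]
  have hneg : (∫ t in (0:ℝ)..(2 * Real.pi), g (-t)) = ∫ t in (0:ℝ)..(2 * Real.pi), g t := by
    rw [intervalIntegral.integral_comp_neg]
    have h := hgper.intervalIntegral_add_eq (-(2 * Real.pi)) 0
    simpa using h
  have hsum : (∫ t in (0:ℝ)..(2 * Real.pi), (g (-t) + g t)) =
      2 * ∫ t in (0:ℝ)..(2 * Real.pi), g t := by
    have hi1 : IntervalIntegrable (fun t : ℝ => g (-t)) MeasureTheory.volume 0 (2 * Real.pi) :=
      (hgc.comp continuous_neg).intervalIntegrable _ _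
    rw [intervalIntegral.integral_add hi1 (hgc.intervalIntegrable _ _), hneg]
    ring
  have hpo : poisson i (fun z => ‖f z‖) x =
      (1 / (2 * Real.pi)) * ∫ t in (0:ℝ)..(2 * Real.pi), g t := rfl
  rw [hpo]
  have hpi : (0:ℝ) ≤ 1 / (2 * Real.pi) := by positivity
  calc (1 / (2 * Real.pi)) * (∫ t in (0:ℝ)..(2 * Real.pi),
        ‖(2⁻¹ : ℝ) • ((1 + j * i) * ((x - expI i (-t))⁻¹ ^ 2) * f (expI i (-t)) +
          (1 - j * i) * ((x - expI i t)⁻¹ ^ 2) * f (expI i t))‖ * (1 - ‖x‖ ^ 2))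
      ≤ (1 / (2 * Real.pi)) * (2 * ∫ t in (0:ℝ)..(2 * Real.pi), g t) := by
        apply mul_le_mul_of_nonneg_left _ hpi
        rw [← hsum]; exact hmono
    _ = 2 * ((1 / (2 * Real.pi)) * ∫ t in (0:ℝ)..(2 * Real.pi), g t) := by ring
end
end
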